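/- arXiv:1311.0173 — 9 statements merged into one kernel-verified Lean document; each statement's English description precedes it below -/
import Mathlib

section
/- Let f(x) = x^T Q x be a quadratic form with symmetric matrix Q, let f̲ = min_{Δ_n} f, f̄ = max_{Δ_n} f, and Q_max = max_i Q_ii. Then for any r ≥ 1 and all x ∈ Δ_n, B_r(f)(x) − f(x) ≤ (Q_max − f̲)/r ≤ (f̄ − f̲)/r. -/
open Matrix

/-- Bernstein approximation of order `r` of `f` on the simplex. -/
noncomputable def bern {n : ℕ} (r : ℕ) (f : (Fin n → ℝ) → ℝ) (x : Fin n → ℝ) : ℝ :=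
  ∑ α ∈ Finset.Nat.antidiagonalTuple n r,
    f (fun i => (α i : ℝ) / r) * ((r.factorial : ℝ) / ∏ i, ((α i).factorial : ℝ)) *
      ∏ i, x i ^ α i

/-- Add 1 to the `i`-th coordinate. -/
def addOne {n : ℕ} (i : Fin n) (β : Fin n → ℕ) : Fin n → ℕ :=
  fun j => β j + if j = i then 1 else 0

/-- Subtract 1 from the `i`-th coordinate. -/
def subOne {n : ℕ} (i : Fin n) (α : Fin n → ℕ) : Fin n → ℕ :=
  fun j => α j - if j = i then 1 else 0

lemma AT_eq (n r : ℕ) : Finset.Nat.antidiagonalTuple n r =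
    Finset.piAntidiag Finset.univ r := by
  ext α
  simp [Finset.Nat.mem_antidiagonalTuple]

lemma weight_eq {n r : ℕ} {α : Fin n → ℕ} (h : ∑ i, α i = r) :
    ((r.factorial : ℝ) / ∏ i, ((α i).factorial : ℝ)) =
      (Nat.multinomial Finset.univ α : ℝ) := by
  have hs := Nat.multinomial_spec (Finset.univ) α
  rw [h] at hs
  have hp : (0:ℝ) < ∏ i, ((α i).factorial : ℝ) := by positivity
  rw [div_eq_iff hp.ne', ← hs]
  push_cast
  ring

lemma mt_thm {n : ℕ} (x : Fin n → ℝ) (r : ℕ) :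
    ∑ α ∈ Finset.Nat.antidiagonalTuple n r,
      (Nat.multinomial Finset.univ α : ℝ) * ∏ i, x i ^ α i = (∑ i, x i) ^ r := by
  rw [AT_eq]
  exact (Finset.sum_pow_eq_sum_piAntidiag _ _ _).symm

lemma shift {n m : ℕ} (i : Fin n) (G : (Fin n → ℕ) → ℝ) :
    ∑ α ∈ Finset.Nat.antidiagonalTuple n (m + 1), (α i : ℝ) * G α =
      ∑ β ∈ Finset.Nat.antidiagonalTuple n m,
        ((β i : ℝ) + 1) * G (addOne i β) := by
  classical
  rw [← Finset.sum_filter_of_ne (p := fun α => α i ≠ 0)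
    (fun α _ h => by intro h0; apply h; simp [h0])]
  refine Finset.sum_nbij' (subOne i) (addOne i) ?_ ?_ ?_ ?_ ?_
  · intro α hα
    simp only [Finset.mem_filter, Finset.Nat.mem_antidiagonalTuple] at hα ⊢
    obtain ⟨hsum, hi0⟩ := hα
    have h1 : ∑ j, α j = α i + ∑ j ∈ Finset.univ.erase i, α j :=
      (Finset.add_sum_erase _ _ (Finset.mem_univ i)).symm
    have h2 : ∑ j, subOne i α j =
        (α i - 1) + ∑ j ∈ Finset.univ.erase i, α j := by
      rw [← Finset.add_sum_erase _ _ (Finset.mem_univ i)]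
      congr 1
      · simp [subOne]
      · exact Finset.sum_congr rfl fun j hj => by
          simp [subOne, (Finset.mem_erase.mp hj).1]
    omega
  · intro β hβ
    simp only [Finset.mem_filter, Finset.Nat.mem_antidiagonalTuple] at hβ ⊢
    refine ⟨?_, by simp [addOne]⟩
    have h1 : ∑ j, β j = β i + ∑ j ∈ Finset.univ.erase i, β j :=
      (Finset.add_sum_erase _ _ (Finset.mem_univ i)).symm
    have h2 : ∑ j, addOne i β j =
        (β i + 1) + ∑ j ∈ Finset.univ.erase i, β j := by
      rw [← Finset.add_sum_erase _ _ (Finset.mem_univ i)]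
      congr 1
      · simp [addOne]
      · exact Finset.sum_congr rfl fun j hj => by
          simp [addOne, (Finset.mem_erase.mp hj).1]
    omega
  · intro α hα
    simp only [Finset.mem_filter] at hα
    funext j
    by_cases hj : j = i
    · subst hj
      have : 1 ≤ α j := Nat.one_le_iff_ne_zero.mpr hα.2
      simp [addOne, subOne]
      omega
    · simp [addOne, subOne, hj]
  · intro β _
    funext j
    by_cases hj : j = i
    · subst hj
      simp [addOne, subOne]
    · simp [addOne, subOne, hj]
  · intro α hα
    simp only [Finset.mem_filter] at hα
    have h1 : 1 ≤ α i := Nat.one_le_iff_ne_zero.mpr hα.2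
    have hkey : addOne i (subOne i α) = α := by
      funext j
      by_cases hj : j = i
      · subst hj
        simp [addOne, subOne]
        omega
      · simp [addOne, subOne, hj]
    have hi1 : ((subOne i α) i : ℝ) + 1 = (α i : ℝ) := by
      simp only [subOne, if_pos rfl]
      push_cast [Nat.cast_sub h1]
      ring
    rw [hkey, hi1]

lemma mult_succ {n m : ℕ} (i : Fin n) {β : Fin n → ℕ} (hβ : ∑ j, β j = m) :
    ((β i : ℝ) + 1) * (Nat.multinomial Finset.univ (addOne i β) : ℝ) =
      ((m : ℝ) + 1) * (Nat.multinomial Finset.univ β : ℝ) := by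
  have hsum : ∑ j, addOne i β j = m + 1 := by
    have h1 : ∑ j, addOne i β j = (∑ j, β j) + ∑ j, (if j = i then 1 else 0) := by
      rw [← Finset.sum_add_distrib]
      rfl
    rw [h1, hβ]
    simp
  have hprod : ∏ j, (addOne i β j).factorial =
      (β i + 1) * ∏ j, (β j).factorial := by
    rw [← Finset.prod_erase_mul _ _ (Finset.mem_univ i),
        ← Finset.prod_erase_mul _ _ (Finset.mem_univ i)]
    have h1 : ∀ j ∈ Finset.univ.erase i, (addOne i β j).factorial =
        (β j).factorial := fun j hj => by
      simp [addOne, (Finset.mem_erase.mp hj).1]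
    rw [Finset.prod_congr rfl h1]
    have : (addOne i β i).factorial = (β i + 1) * (β i).factorial := by
      simp [addOne, Nat.factorial_succ]
    rw [this]
    ring
  have key : (β i + 1) * Nat.multinomial Finset.univ (addOne i β) =
      (m + 1) * Nat.multinomial Finset.univ β := by
    have hP : 0 < ∏ j, (β j).factorial := Finset.prod_pos fun j _ => Nat.factorial_pos _
    apply Nat.eq_of_mul_eq_mul_left hP
    have s1 := Nat.multinomial_spec Finset.univ (addOne i β)
    have s2 := Nat.multinomial_spec Finset.univ β
    rw [hsum] at s1
    rw [hβ] at s2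
    calc (∏ j, (β j).factorial) * ((β i + 1) * Nat.multinomial Finset.univ (addOne i β))
        = (∏ j, (addOne i β j).factorial) *
            Nat.multinomial Finset.univ (addOne i β) := by rw [hprod]; ring
      _ = (m + 1).factorial := s1
      _ = (m + 1) * m.factorial := rfl
      _ = (∏ j, (β j).factorial) * ((m + 1) * Nat.multinomial Finset.univ β) := by
          rw [← s2]; ring
  exact_mod_cast key

lemma prod_addOne {n : ℕ} (x : Fin n → ℝ) (i : Fin n) (β : Fin n → ℕ) :
    ∏ j, x j ^ addOne i β j = x i * ∏ j, x j ^ β j := by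
  have h1 : ∀ j, x j ^ addOne i β j = x j ^ β j * x j ^ (if j = i then 1 else 0) := by
    intro j; rw [← pow_add]; rfl
  rw [Finset.prod_congr rfl fun j _ => h1 j, Finset.prod_mul_distrib]
  have : ∏ j, x j ^ (if j = i then 1 else 0) = x i := by
    simp [pow_ite]
  rw [this]; ring

lemma moment1 {n : ℕ} {x : Fin n → ℝ} (hx1 : ∑ j, x j = 1) (i : Fin n) (r : ℕ) :
    ∑ α ∈ Finset.Nat.antidiagonalTuple n r,
      (α i : ℝ) * ((Nat.multinomial Finset.univ α : ℝ) * ∏ j, x j ^ α j)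
      = r * x i := by
  cases r with
  | zero => simp [Finset.Nat.antidiagonalTuple_zero_right]
  | succ m =>
    rw [shift i (fun α => (Nat.multinomial Finset.univ α : ℝ) * ∏ j, x j ^ α j)]
    have hterm : ∀ β ∈ Finset.Nat.antidiagonalTuple n m,
        ((β i : ℝ) + 1) * ((Nat.multinomial Finset.univ (addOne i β) : ℝ) *
          ∏ j, x j ^ addOne i β j)
        = ((m : ℝ) + 1) * x i *
            ((Nat.multinomial Finset.univ β : ℝ) * ∏ j, x j ^ β j) := by
      intro β hβ
      rw [Finset.Nat.mem_antidiagonalTuple] at hβ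
      rw [prod_addOne]
      linear_combination (mult_succ i hβ) * (x i * ∏ j, x j ^ β j)
    rw [Finset.sum_congr rfl hterm, ← Finset.mul_sum, mt_thm, hx1]
    push_cast
    ring

lemma moment2 {n : ℕ} {x : Fin n → ℝ} (hx1 : ∑ j, x j = 1) (i j : Fin n) (r : ℕ) :
    ∑ α ∈ Finset.Nat.antidiagonalTuple n r,
      ((α i : ℝ) * (α j : ℝ)) * ((Nat.multinomial Finset.univ α : ℝ) * ∏ k, x k ^ α k)
      = (r : ℝ) * ((r : ℝ) - 1) * x i * x j +
          (if i = j then (r : ℝ) * x i else 0) := by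
  classical
  cases r with
  | zero => simp [Finset.Nat.antidiagonalTuple_zero_right]
  | succ m =>
    have h0 : ∀ α : Fin n → ℕ,
        ((α i : ℝ) * (α j : ℝ)) * ((Nat.multinomial Finset.univ α : ℝ) * ∏ k, x k ^ α k)
        = (α i : ℝ) * ((α j : ℝ) * ((Nat.multinomial Finset.univ α : ℝ) * ∏ k, x k ^ α k)) :=
      fun α => by ring
    rw [Finset.sum_congr rfl fun α _ => h0 α,
      shift i (fun α => (α j : ℝ) * ((Nat.multinomial Finset.univ α : ℝ) * ∏ k, x k ^ α k))]
    have hterm : ∀ β ∈ Finset.Nat.antidiagonalTuple n m,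
        ((β i : ℝ) + 1) * (((addOne i β) j : ℝ) *
          ((Nat.multinomial Finset.univ (addOne i β) : ℝ) *
            ∏ k, x k ^ addOne i β k))
        = ((m : ℝ) + 1) * x i *
            (((β j : ℝ) + (if i = j then 1 else 0)) *
              ((Nat.multinomial Finset.univ β : ℝ) * ∏ k, x k ^ β k)) := by
      intro β hβ
      rw [Finset.Nat.mem_antidiagonalTuple] at hβ
      rw [prod_addOne]
      have hj : ((addOne i β) j : ℝ) = (β j : ℝ) + (if i = j then 1 else 0) := by
        simp only [addOne]
        push_cast
        by_cases h : j = i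
        · subst h; simp
        · simp [h, Ne.symm h]
      rw [hj]
      linear_combination (mult_succ i hβ) *
        (((β j : ℝ) + (if i = j then 1 else 0)) * (x i * ∏ k, x k ^ β k))
    rw [Finset.sum_congr rfl hterm, ← Finset.mul_sum]
    have hsplit : ∑ β ∈ Finset.Nat.antidiagonalTuple n m,
        (((β j : ℝ) + (if i = j then 1 else 0)) *
          ((Nat.multinomial Finset.univ β : ℝ) * ∏ k, x k ^ β k))
        = (m : ℝ) * x j + (if i = j then 1 else 0) := by
      have h1 : ∀ β : Fin n → ℕ,
          (((β j : ℝ) + (if i = j then 1 else 0)) *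
            ((Nat.multinomial Finset.univ β : ℝ) * ∏ k, x k ^ β k))
          = (β j : ℝ) * ((Nat.multinomial Finset.univ β : ℝ) * ∏ k, x k ^ β k) +
            (if i = j then 1 else 0) *
              ((Nat.multinomial Finset.univ β : ℝ) * ∏ k, x k ^ β k) := fun β => by ring
      rw [Finset.sum_congr rfl fun β _ => h1 β, Finset.sum_add_distrib,
        moment1 hx1 j m, ← Finset.mul_sum, mt_thm, hx1]
      simp
    rw [hsplit]
    by_cases h : i = j
    · subst h
      simp only [if_pos rfl]
      push_cast
      ring
    · simp only [h, if_false]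
      push_cast
      ring

lemma bern_eq {n r : ℕ} (hr : 1 ≤ r) (Q : Matrix (Fin n) (Fin n) ℝ)
    {x : Fin n → ℝ} (hx1 : ∑ j, x j = 1) :
    bern r (fun y => y ⬝ᵥ Q.mulVec y) x =
      (1 / r) * ∑ i, Q i i * x i +
        (1 - 1 / r) * (x ⬝ᵥ Q.mulVec x) := by
  classical
  have hr0 : (r : ℝ) ≠ 0 := Nat.cast_ne_zero.mpr (by omega)
  have hf : ∀ y : Fin n → ℝ, y ⬝ᵥ Q.mulVec y = ∑ i, ∑ j, Q i j * (y i * y j) := by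
    intro y
    simp only [dotProduct, Matrix.mulVec, Finset.mul_sum]
    exact Finset.sum_congr rfl fun i _ => Finset.sum_congr rfl fun j _ => by ring
  have h1 : bern r (fun y => y ⬝ᵥ Q.mulVec y) x
      = ∑ α ∈ Finset.Nat.antidiagonalTuple n r, ∑ i, ∑ j,
          (Q i j / r / r) *
            (((α i : ℝ) * (α j : ℝ)) *
              ((Nat.multinomial Finset.univ α : ℝ) * ∏ k, x k ^ α k)) := by
    unfold bern
    refine Finset.sum_congr rfl fun α hα => ?_
    rw [Finset.Nat.mem_antidiagonalTuple] at hα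
    rw [weight_eq hα]
    simp only [hf, Finset.sum_mul]
    exact Finset.sum_congr rfl fun i _ => Finset.sum_congr rfl fun j _ => by
      field_simp
  rw [h1, Finset.sum_comm]
  have h2 : ∀ i : Fin n, ∑ α ∈ Finset.Nat.antidiagonalTuple n r, ∑ j,
      (Q i j / r / r) * (((α i : ℝ) * (α j : ℝ)) *
        ((Nat.multinomial Finset.univ α : ℝ) * ∏ k, x k ^ α k))
      = ∑ j, (Q i j / r / r) *
          ((r : ℝ) * ((r : ℝ) - 1) * x i * x j + (if i = j then (r : ℝ) * x i else 0)) := by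
    intro i
    rw [Finset.sum_comm]
    refine Finset.sum_congr rfl fun j _ => ?_
    rw [← Finset.mul_sum, moment2 hx1 i j r]
  rw [Finset.sum_congr rfl fun i _ => h2 i]
  have h3 : ∀ i : Fin n, ∑ j, (Q i j / r / r) *
      ((r : ℝ) * ((r : ℝ) - 1) * x i * x j + (if i = j then (r : ℝ) * x i else 0))
      = (∑ j, (1 - 1 / r) * (Q i j * (x i * x j))) + (1 / r) * (Q i i * x i) := by
    intro i
    have hterm : ∀ j : Fin n, (Q i j / r / r) *
        ((r : ℝ) * ((r : ℝ) - 1) * x i * x j + (if i = j then (r : ℝ) * x i else 0))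
        = (1 - 1 / r) * (Q i j * (x i * x j)) +
          (if i = j then (1 / r) * (Q i j * x i) else 0) := by
      intro j
      by_cases h : i = j
      · subst h
        rw [if_pos rfl, if_pos rfl]
        field_simp
      · simp only [if_neg h, add_zero]
        field_simp
    rw [Finset.sum_congr rfl fun j _ => hterm j, Finset.sum_add_distrib]
    congr 1
    rw [Finset.sum_ite_eq Finset.univ i fun j => (1 / (r:ℝ)) * (Q i j * x i)]
    simp
  rw [Finset.sum_congr rfl fun i _ => h3 i, Finset.sum_add_distrib, hf x]
  have h4 : ∑ i : Fin n, ∑ j, (1 - 1/(r:ℝ)) * (Q i j * (x i * x j)) =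
      (1 - 1/(r:ℝ)) * ∑ i : Fin n, ∑ j, Q i j * (x i * x j) := by
    rw [Finset.mul_sum]
    exact Finset.sum_congr rfl fun i _ => (Finset.mul_sum _ _ _).symm
  have h5 : ∑ i : Fin n, (1/(r:ℝ)) * (Q i i * x i) =
      (1/(r:ℝ)) * ∑ i : Fin n, Q i i * x i := (Finset.mul_sum _ _ _).symm
  rw [h4, h5]
  ring

theorem stmt5 (n r : ℕ) (hn : 0 < n) (hr : 1 ≤ r) (Q : Matrix (Fin n) (Fin n) ℝ)
    (hQ : Q.IsSymm) (fmin fmax Qmax : ℝ)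
    (hmin : IsLeast ((fun y => y ⬝ᵥ Q.mulVec y) '' stdSimplex ℝ (Fin n)) fmin)
    (hmax : IsGreatest ((fun y => y ⬝ᵥ Q.mulVec y) '' stdSimplex ℝ (Fin n)) fmax)
    (hQmax : IsGreatest (Set.range fun i => Q i i) Qmax)
    (x : Fin n → ℝ) (hx : x ∈ stdSimplex ℝ (Fin n)) :
    bern r (fun y => y ⬝ᵥ Q.mulVec y) x - x ⬝ᵥ Q.mulVec x ≤ (Qmax - fmin) / r ∧
      (Qmax - fmin) / r ≤ (fmax - fmin) / r := by
  have hr0 : (0 : ℝ) < r := by positivity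
  obtain ⟨hxnn, hx1⟩ := hx
  constructor
  · have heq := bern_eq hr Q hx1
    have hdiag : ∑ i, Q i i * x i ≤ Qmax := by
      calc ∑ i, Q i i * x i ≤ ∑ i, Qmax * x i := by
            refine Finset.sum_le_sum fun i _ => ?_
            exact mul_le_mul_of_nonneg_right (hQmax.2 (Set.mem_range_self i)) (hxnn i)
        _ = Qmax := by rw [← Finset.mul_sum, hx1, mul_one]
    have hfmin : fmin ≤ x ⬝ᵥ Q.mulVec x := hmin.2 ⟨x, ⟨hxnn, hx1⟩, rfl⟩
    rw [heq]
    have hrw : (1 / (r:ℝ)) * ∑ i, Q i i * x i + (1 - 1 / r) * (x ⬝ᵥ Q.mulVec x) -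
        x ⬝ᵥ Q.mulVec x = ((∑ i, Q i i * x i) - x ⬝ᵥ Q.mulVec x) / r := by
      field_simp
      ring
    rw [hrw]
    gcongr

  · obtain ⟨i, hi⟩ := hQmax.1
    have he : Pi.single i (1:ℝ) ∈ stdSimplex ℝ (Fin n) := by
      constructor
      · intro j
        by_cases h : j = i
        · subst h; simp
        · simp [Pi.single_apply, h]
      · simp
    have hfe : (Pi.single i 1 : Fin n → ℝ) ⬝ᵥ Q.mulVec (Pi.single i 1) = Q i i := by
      simp [dotProduct, Matrix.mulVec, Pi.single_apply]
    have h2 : Q i i ≤ fmax := by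
      simpa [hfe] using hmax.2 ⟨Pi.single i 1, he, rfl⟩
    have hQf : Qmax ≤ fmax := by rw [← hi]; exact h2
    gcongr
end

section
/- For any quadratic form f(x) = x^T Q x and integer r ≥ 1, the minimum of f over the regular grid Δ(n,r) satisfies f_{Δ(n,r)} − f̲ ≤ (f̄ − f̲)/r, where f̲ and f̄ are the minimum and maximum of f over Δ_n. -/
open Matrix

/-- The regular grid `Δ(n,r)` in the standard simplex. -/
def grid (n r : ℕ) : Set (Fin n → ℝ) :=
  {x | x ∈ stdSimplex ℝ (Fin n) ∧ ∀ i, ∃ m : ℕ, (r : ℝ) * x i = m}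

theorem sum_cons (n r : ℕ) (g : (Fin (r+1) → Fin n) → ℝ) :
    ∑ ω : Fin (r+1) → Fin n, g ω = ∑ a : Fin n, ∑ ω : Fin r → Fin n, g (Fin.cons a ω) := by
  rw [Fintype.sum_equiv (Fin.consEquiv fun _ => Fin n).symm g
    (fun p => g (Fin.cons p.1 p.2)) (fun ω => by simp [Fin.consEquiv]),
    Fintype.sum_prod_type]

theorem lemW (n : ℕ) (x : Fin n → ℝ) (hx : ∑ i, x i = 1) :
    ∀ r : ℕ, ∑ ω : Fin r → Fin n, ∏ k, x (ω k) = 1 := by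
  intro r
  induction r with
  | zero => simp
  | succ r ih =>
    rw [sum_cons]
    simp only [Fin.prod_univ_succ, Fin.cons_zero, Fin.cons_succ]
    rw [← Finset.sum_mul_sum, hx, ih]
    ring

theorem lemL (n : ℕ) (x : Fin n → ℝ) (hx : ∑ i, x i = 1) (v : Fin n → ℝ) :
    ∀ r : ℕ, ∑ ω : Fin r → Fin n, (∏ k, x (ω k)) * (∑ k, v (ω k))
      = r * ∑ i, x i * v i := by
  intro r
  induction r with
  | zero => simp
  | succ r ih =>
    rw [sum_cons]
    simp only [Fin.prod_univ_succ, Fin.cons_zero, Fin.cons_succ, Fin.sum_univ_succ]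
    have h1 : ∀ a : Fin n, ∑ ω : Fin r → Fin n,
        x a * (∏ k, x (ω k)) * (v a + ∑ k, v (ω k))
        = x a * v a * (∑ ω : Fin r → Fin n, ∏ k, x (ω k))
          + x a * (∑ ω : Fin r → Fin n, (∏ k, x (ω k)) * (∑ k, v (ω k))) := by
      intro a
      rw [Finset.mul_sum, Finset.mul_sum, ← Finset.sum_add_distrib]
      exact Finset.sum_congr rfl fun ω _ => by ring
    calc ∑ a : Fin n, ∑ ω : Fin r → Fin n,
          x a * (∏ k, x (ω k)) * (v a + ∑ k, v (ω k))
        = ∑ a : Fin n, (x a * v a * 1 + x a * (r * ∑ i, x i * v i)) := by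
          refine Finset.sum_congr rfl fun a _ => ?_
          rw [h1 a, lemW n x hx r, ih]
      _ = (r+1 : ℕ) * ∑ i, x i * v i := by
          rw [Finset.sum_add_distrib]
          simp only [mul_one]
          rw [← Finset.sum_mul, hx]
          push_cast; ring

theorem lemT (n : ℕ) (x : Fin n → ℝ) (hx : ∑ i, x i = 1) (Q : Matrix (Fin n) (Fin n) ℝ) :
    ∀ r : ℕ, ∑ ω : Fin r → Fin n, (∏ k, x (ω k)) * (∑ k, ∑ l, Q (ω k) (ω l))
      = r * (r - 1) * (∑ i, ∑ j, x i * Q i j * x j) + r * ∑ i, x i * Q i i := by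
  intro r
  induction r with
  | zero => simp
  | succ r ih =>
    set F := ∑ i, ∑ j, x i * Q i j * x j with hF
    set d := ∑ i, x i * Q i i with hd
    rw [sum_cons]
    have key : ∀ a : Fin n, ∑ ω : Fin r → Fin n,
        (∏ k : Fin (r+1), x ((Fin.cons a ω : Fin (r+1) → Fin n) k)) *
          (∑ k : Fin (r+1), ∑ l : Fin (r+1), Q ((Fin.cons a ω : Fin (r+1) → Fin n) k) ((Fin.cons a ω : Fin (r+1) → Fin n) l))
        = x a * Q a a + x a * ((r:ℝ) * ∑ j, x j * Q a j)
          + x a * ((r:ℝ) * ∑ j, x j * Q j a)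
          + x a * ((r:ℝ)*((r:ℝ)-1)*F + (r:ℝ)*d) := by
      intro a
      have e1 : ∀ ω : Fin r → Fin n,
          (∏ k : Fin (r+1), x ((Fin.cons a ω : Fin (r+1) → Fin n) k)) *
            (∑ k : Fin (r+1), ∑ l : Fin (r+1), Q ((Fin.cons a ω : Fin (r+1) → Fin n) k) ((Fin.cons a ω : Fin (r+1) → Fin n) l))
          = x a * Q a a * (∏ k, x (ω k))
            + x a * ((∏ k, x (ω k)) * (∑ l, Q a (ω l)))
            + x a * ((∏ k, x (ω k)) * (∑ k, Q (ω k) a))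
            + x a * ((∏ k, x (ω k)) * (∑ k, ∑ l, Q (ω k) (ω l))) := by
        intro ω
        simp only [Fin.prod_univ_succ, Fin.sum_univ_succ, Fin.cons_zero, Fin.cons_succ]
        rw [Finset.sum_add_distrib]
        ring
      simp only [e1]
      rw [Finset.sum_add_distrib, Finset.sum_add_distrib, Finset.sum_add_distrib,
          ← Finset.mul_sum, ← Finset.mul_sum, ← Finset.mul_sum, ← Finset.mul_sum,
          lemW n x hx r, lemL n x hx (fun j => Q a j) r, lemL n x hx (fun j => Q j a) r, ih]
      ring
    have c1 : ∑ a, x a * ((r:ℝ) * ∑ j, x j * Q a j) = r * F := by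
      rw [hF]
      simp only [Finset.mul_sum]
      exact Finset.sum_congr rfl fun a _ => Finset.sum_congr rfl fun j _ => by ring
    have c2 : ∑ a, x a * ((r:ℝ) * ∑ j, x j * Q j a) = r * F := by
      have hsw : ∑ a, ∑ j, x a * ((r:ℝ) * (x j * Q j a)) = ∑ j, ∑ a, x a * ((r:ℝ) * (x j * Q j a)) :=
        Finset.sum_comm
      simp only [Finset.mul_sum]
      rw [hsw, hF]
      simp only [Finset.mul_sum]
      exact Finset.sum_congr rfl fun a _ => Finset.sum_congr rfl fun j _ => by ring
    simp only [key]
    rw [Finset.sum_add_distrib, Finset.sum_add_distrib, Finset.sum_add_distrib,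
        c1, c2, ← Finset.sum_mul, hx, ← hd]
    push_cast; ring

theorem fiber_sum (n r : ℕ) (ω : Fin r → Fin n) (g : Fin n → ℝ) :
    ∑ k : Fin r, g (ω k) = ∑ i : Fin n, ((Finset.univ.filter fun k => ω k = i).card : ℝ) * g i := by
  rw [← Finset.sum_fiberwise_of_maps_to (fun k _ => Finset.mem_univ (ω k)) (fun k => g (ω k))]
  refine Finset.sum_congr rfl fun i _ => ?_
  rw [Finset.sum_congr rfl (fun k hk => by rw [(Finset.mem_filter.1 hk).2] :
      ∀ k ∈ Finset.univ.filter fun k => ω k = i, g (ω k) = g i),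
    Finset.sum_const, nsmul_eq_mul]

theorem stmt6 (n r : ℕ) (hr : 1 ≤ r) (Q : Matrix (Fin n) (Fin n) ℝ) (hQ : Q.IsSymm)
    (fmin fmax fgrid : ℝ)
    (hmin : IsLeast ((fun y => y ⬝ᵥ Q.mulVec y) '' stdSimplex ℝ (Fin n)) fmin)
    (hmax : IsGreatest ((fun y => y ⬝ᵥ Q.mulVec y) '' stdSimplex ℝ (Fin n)) fmax)
    (hgrid : IsLeast ((fun y => y ⬝ᵥ Q.mulVec y) '' grid n r) fgrid) :
    fgrid - fmin ≤ (fmax - fmin) / r := by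
  obtain ⟨x, hxmem, hxval⟩ := hmin.1
  have hx0 : ∀ i, 0 ≤ x i := hxmem.1
  have hx1 : ∑ i, x i = 1 := hxmem.2
  have hrpos : (0:ℝ) < r := by exact_mod_cast hr
  have hr0 : (r:ℝ) ≠ 0 := ne_of_gt hrpos
  -- counts and grid points
  set c : (Fin r → Fin n) → Fin n → ℕ := fun ω i => (Finset.univ.filter fun k => ω k = i).card with hc
  set y : (Fin r → Fin n) → Fin n → ℝ := fun ω i => (c ω i : ℝ) / r with hy
  have hcsum : ∀ ω, ∑ i, c ω i = r := by
    intro ω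
    rw [hc, ← Finset.card_eq_sum_card_fiberwise (fun k _ => Finset.mem_univ (ω k))]
    simp
  have hygrid : ∀ ω, y ω ∈ grid n r := by
    intro ω
    refine ⟨⟨fun i => div_nonneg (Nat.cast_nonneg _) hrpos.le, ?_⟩, fun i => ⟨c ω i, ?_⟩⟩
    · rw [← Finset.sum_div]
      rw [div_eq_one_iff_eq hr0]
      exact_mod_cast hcsum ω
    · rw [hy]
      field_simp
  -- value at grid points
  have hyval : ∀ ω, y ω ⬝ᵥ Q.mulVec (y ω) = (1/((r:ℝ)*r)) * ∑ k, ∑ l, Q (ω k) (ω l) := by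
    intro ω
    have h1 : ∑ k : Fin r, ∑ l : Fin r, Q (ω k) (ω l)
        = ∑ i, (c ω i : ℝ) * ∑ j, (c ω j : ℝ) * Q i j :=
      calc ∑ k, ∑ l, Q (ω k) (ω l)
          = ∑ k, ∑ j, (c ω j : ℝ) * Q (ω k) j :=
            Finset.sum_congr rfl fun k _ => fiber_sum n r ω fun j => Q (ω k) j
        _ = ∑ i, (c ω i : ℝ) * ∑ j, (c ω j : ℝ) * Q i j :=
            fiber_sum n r ω fun i => ∑ j, (c ω j : ℝ) * Q i j
    show ∑ i, y ω i * (Q.mulVec (y ω)) i = _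
    simp only [mulVec, dotProduct]
    rw [h1, Finset.mul_sum]
    refine Finset.sum_congr rfl fun i _ => ?_
    simp only [hy]
    rw [Finset.mul_sum, Finset.mul_sum, Finset.mul_sum]
    refine Finset.sum_congr rfl fun j _ => ?_
    rw [div_eq_mul_inv, div_eq_mul_inv, one_div, mul_inv]
    ring
  -- expectation bound
  have pnonneg : ∀ ω : Fin r → Fin n, 0 ≤ ∏ k, x (ω k) :=
    fun ω => Finset.prod_nonneg fun k _ => hx0 _
  have hE1 : fgrid ≤ ∑ ω : Fin r → Fin n, (∏ k, x (ω k)) * (y ω ⬝ᵥ Q.mulVec (y ω)) := by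
    have hle : ∑ ω : Fin r → Fin n, (∏ k, x (ω k)) * fgrid
        ≤ ∑ ω : Fin r → Fin n, (∏ k, x (ω k)) * (y ω ⬝ᵥ Q.mulVec (y ω)) :=
      Finset.sum_le_sum fun ω _ =>
        mul_le_mul_of_nonneg_left (hgrid.2 ⟨y ω, hygrid ω, rfl⟩) (pnonneg ω)
    calc fgrid = (∑ ω : Fin r → Fin n, ∏ k, x (ω k)) * fgrid := by
          rw [lemW n x hx1 r, one_mul]
      _ = ∑ ω : Fin r → Fin n, (∏ k, x (ω k)) * fgrid := by rw [Finset.sum_mul]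
      _ ≤ _ := hle
  have hFmin : ∑ i, ∑ j, x i * Q i j * x j = fmin := by
    rw [← hxval]
    simp only [dotProduct, mulVec]
    refine Finset.sum_congr rfl fun i _ => ?_
    rw [Finset.mul_sum]
    exact Finset.sum_congr rfl fun j _ => by ring
  set d := ∑ i, x i * Q i i with hdd
  have hE2 : ∑ ω : Fin r → Fin n, (∏ k, x (ω k)) * (y ω ⬝ᵥ Q.mulVec (y ω))
      = (1/((r:ℝ)*r)) * ((r:ℝ)*((r:ℝ)-1)*fmin + (r:ℝ)*d) := by
    calc ∑ ω : Fin r → Fin n, (∏ k, x (ω k)) * (y ω ⬝ᵥ Q.mulVec (y ω))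
        = ∑ ω : Fin r → Fin n,
            (1/((r:ℝ)*r)) * ((∏ k, x (ω k)) * (∑ k, ∑ l, Q (ω k) (ω l))) := by
          refine Finset.sum_congr rfl fun ω _ => ?_
          rw [hyval ω]; ring
      _ = (1/((r:ℝ)*r)) * ∑ ω : Fin r → Fin n,
            (∏ k, x (ω k)) * (∑ k, ∑ l, Q (ω k) (ω l)) := by rw [Finset.mul_sum]
      _ = _ := by rw [lemT n x hx1 Q r, hFmin]
  have hdmaxle : d ≤ fmax := by
    have hQii : ∀ i, Q i i ≤ fmax := by
      intro i
      have hmem : (fun j => if i = j then (1:ℝ) else 0) ∈ stdSimplex ℝ (Fin n) :=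
        ite_eq_mem_stdSimplex ℝ i
      have hval : (fun j => if i = j then (1:ℝ) else 0) ⬝ᵥ
          Q.mulVec (fun j => if i = j then (1:ℝ) else 0) = Q i i := by
        simp [dotProduct, mulVec, mul_ite, ite_mul]
      exact hmax.2 ⟨_, hmem, hval⟩
    calc d ≤ ∑ i, x i * fmax :=
        Finset.sum_le_sum fun i _ => mul_le_mul_of_nonneg_left (hQii i) (hx0 i)
      _ = fmax := by rw [← Finset.sum_mul, hx1, one_mul]
  have hkey : fgrid ≤ fmin - fmin/r + d/r := by
    have heq : (1/((r:ℝ)*r)) * ((r:ℝ)*((r:ℝ)-1)*fmin + (r:ℝ)*d) = fmin - fmin/r + d/r := by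
      field_simp
    rw [← heq]
    exact hE2 ▸ hE1
  have hdiv : d/r ≤ fmax/r := by gcongr
  have hsub : (fmax - fmin)/r = fmax/r - fmin/r := sub_div _ _ _
  linarith
end

section
/- For f(x) = Σ_{i=1}^n x_i^2 on the standard simplex Δ_n, with r = kn + s where k ≥ 0 and 0 ≤ s < n, the minimum of f over the regular grid Δ(n,r) equals 1/n + s(n−s)/(n·r^2). -/
lemma int_le_sq (d : ℤ) : d ≤ d ^ 2 := by
  rcases le_or_gt d 0 with h | h
  · nlinarith [sq_nonneg d]
  · have h1 : 1 ≤ d := h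
    nlinarith

lemma sum_ite_lt (n s : ℕ) (hs : s ≤ n) (a b : ℝ) :
    ∑ i : Fin n, (if (i : ℕ) < s then a else b) = s * a + (n - s) * b := by
  rw [Fin.sum_univ_eq_sum_range (fun j => if j < s then a else b)]
  rw [← Finset.sum_range_add_sum_Ico _ hs]
  have h1 : ∑ j ∈ Finset.range s, (if j < s then a else b) = s * a := by
    rw [Finset.sum_congr rfl (fun j hj => if_pos (Finset.mem_range.mp hj))]
    simp [mul_comm]
  have h2 : ∑ j ∈ Finset.Ico s n, (if j < s then a else b) = (n - s) * b := by
    rw [Finset.sum_congr rfl (fun j hj => if_neg (not_lt.mpr (Finset.mem_Ico.mp hj).1))]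
    simp [Nat.card_Ico, Nat.cast_sub hs, mul_comm]
  rw [h1, h2]

lemma int_bound (n k s : ℕ) (m : Fin n → ℤ) (hsum : ∑ i, m i = k * n + s) :
    ((k : ℤ) ^ 2 * n + 2 * k * s + s) ≤ ∑ i, (m i) ^ 2 := by
  have hd : ∑ i, (m i - k) ≤ ∑ i, (m i - k) ^ 2 :=
    Finset.sum_le_sum (fun i _ => int_le_sq _)
  have e1 : ∑ i : Fin n, (m i - k) = s := by
    rw [Finset.sum_sub_distrib, hsum, Finset.sum_const]
    push_cast
    simp [Finset.card_univ]
    ring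
  have e2 : ∑ i : Fin n, (m i - (k : ℤ)) ^ 2
      = ∑ i, (m i) ^ 2 - 2 * k * (↑(k * n + s)) + n * k ^ 2 := by
    have : ∀ i : Fin n, (m i - (k : ℤ)) ^ 2 = (m i) ^ 2 - 2 * k * m i + k ^ 2 := by
      intro i; ring
    rw [Finset.sum_congr rfl (fun i _ => this i), Finset.sum_add_distrib,
      Finset.sum_sub_distrib, ← Finset.mul_sum, hsum, Finset.sum_const]
    simp [Finset.card_univ]
  rw [e1, e2] at hd
  push_cast at hd ⊢
  nlinarith

theorem stmt7 (n r k s : ℕ) (hs : s < n) (hr : r = k * n + s) :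
    IsLeast ((fun x : Fin n → ℝ => ∑ i, x i ^ 2) '' grid n r)
      (1 / n + (s : ℝ) * ((n : ℝ) - s) / (n * (r : ℝ) ^ 2)) := by
  have hn : 0 < n := Nat.zero_lt_of_lt hs
  have hnR : (0:ℝ) < n := by exact_mod_cast hn
  constructor
  · -- membership
    rcases Nat.eq_zero_or_pos r with hr0 | hrpos
    · have hs0 : s = 0 := by omega
      refine ⟨fun _ => 1/n, ⟨⟨fun i => by positivity, ?_⟩, fun i => ⟨0, by simp [hr0]⟩⟩, ?_⟩
      · simp [Finset.card_univ]
        field_simp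
      · simp only [hs0, hr0]
        rw [Finset.sum_const, Finset.card_univ, Fintype.card_fin]
        push_cast
        field_simp
        ring_nf
        rw [← mul_pow, mul_inv_cancel₀ hnR.ne', one_pow]
    · have hrR : (0:ℝ) < r := by exact_mod_cast hrpos
      have hrr : (r:ℝ) = k * n + s := by rw [hr]; push_cast; ring
      have hne : (k:ℝ) * n + s ≠ 0 := by rw [← hrr]; exact hrR.ne'
      set x : Fin n → ℝ := fun i => if (i:ℕ) < s then ((k:ℝ)+1)/r else (k:ℝ)/r with hxdef
      refine ⟨x, ⟨⟨fun i => ?_, ?_⟩, fun i => ?_⟩, ?_⟩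
      · by_cases h : (i:ℕ) < s <;> simp [hxdef, h] <;> positivity
      · rw [hxdef, sum_ite_lt n s hs.le, hrr]
        field_simp
        ring
      · by_cases h : (i:ℕ) < s
        · exact ⟨k+1, by simp [hxdef, h]; field_simp⟩
        · exact ⟨k, by simp [hxdef, h]; field_simp⟩
      · have hv : ∀ i, x i ^ 2 = if (i:ℕ) < s then (((k:ℝ)+1)/r)^2 else ((k:ℝ)/r)^2 := by
          intro i; by_cases h : (i:ℕ) < s <;> simp [hxdef, h]
        simp only [hv]
        rw [sum_ite_lt n s hs.le, hrr]
        field_simp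
        ring
  · -- lower bound
    rintro v ⟨x, ⟨⟨hx0, hx1⟩, hx2⟩, rfl⟩
    rcases Nat.eq_zero_or_pos r with hr0 | hrpos
    · have hs0 : s = 0 := by omega
      have hcs : ((∑ i, x i) ^ 2 : ℝ) ≤ (Finset.univ : Finset (Fin n)).card * ∑ i, x i ^ 2 :=
        sq_sum_le_card_mul_sum_sq
      rw [hx1, Finset.card_univ, Fintype.card_fin] at hcs
      have h1n : 1 / (n:ℝ) ≤ ∑ i, x i ^ 2 := by
        rw [div_le_iff₀ hnR]; nlinarith
      simpa [hs0, hr0] using h1n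
    · have hrR : (0:ℝ) < r := by exact_mod_cast hrpos
      have hrr : (r:ℝ) = k * n + s := by rw [hr]; push_cast; ring
      have hne : (k:ℝ) * n + s ≠ 0 := by rw [← hrr]; exact hrR.ne'
      choose m hm using hx2
      have hxm : ∀ i, x i = (m i : ℝ) / r := fun i => by
        rw [eq_div_iff hrR.ne', mul_comm]; exact hm i
      have hmsum : ∑ i, m i = r := by
        have : ((∑ i, m i : ℕ) : ℝ) = r := by
          push_cast
          rw [Finset.sum_congr rfl (fun i _ => (hm i).symm), ← Finset.mul_sum, hx1, mul_one]
        exact_mod_cast this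
      have hib : ((k:ℤ)^2 * n + 2*k*s + s) ≤ ∑ i, ((m i : ℤ))^2 :=
        int_bound n k s (fun i => (m i : ℤ)) (by
          exact_mod_cast congrArg (Nat.cast : ℕ → ℤ) (hmsum.trans hr))
      have hibR : ((k:ℝ)^2 * n + 2*k*s + s) ≤ ∑ i, ((m i : ℝ))^2 := by
        exact_mod_cast hib
      have hval : ∑ i, x i ^ 2 = (∑ i, ((m i : ℝ))^2) / r^2 := by
        rw [Finset.sum_div]
        exact Finset.sum_congr rfl (fun i _ => by rw [hxm i]; ring)
      have htarget : 1 / (n:ℝ) + (s : ℝ) * ((n : ℝ) - s) / (n * (r : ℝ) ^ 2)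
          = ((k:ℝ)^2 * n + 2*k*s + s) / r^2 := by
        rw [hrr]
        rw [div_add_div _ _ hnR.ne' (mul_ne_zero hnR.ne' (pow_ne_zero 2 hne)),
          div_eq_div_iff (mul_ne_zero hnR.ne' (mul_ne_zero hnR.ne' (pow_ne_zero 2 hne))) (pow_ne_zero 2 hne)]
        ring
      show 1 / (n:ℝ) + (s : ℝ) * ((n : ℝ) - s) / (n * (r : ℝ) ^ 2) ≤ ∑ i, x i ^ 2
      rw [htarget, hval]
      gcongr
end

section
/- For any cubic homogeneous polynomial f in n variables and any integer r ≥ 2, one has max_{x∈Δ_n} (B_r(f)(x) − f(x)) ≤ (4/r − 4/r^2)·(f̄ − f̲), where f̲, f̄ are the min and max of f over Δ_n. -/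
namespace Stmt9Aux

open Finset

variable {n : ℕ}

/-- the multinomial weight as a real number -/
noncomputable def w (n r : ℕ) (α : Fin n → ℕ) : ℝ :=
  (r.factorial : ℝ) / ∏ i, ((α i).factorial : ℝ)

lemma w_eq {r : ℕ} {α : Fin n → ℕ} (hα : ∑ i, α i = r) :
    w n r α = (Nat.multinomial univ α : ℝ) := by
  have h := Nat.multinomial_spec (univ : Finset (Fin n)) α
  rw [hα] at h
  have hne : (∏ i, ((α i).factorial : ℝ)) ≠ 0 := by
    apply Finset.prod_ne_zero_iff.2
    intro i _
    exact_mod_cast (Nat.factorial_pos _).ne'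
  rw [w, div_eq_iff hne]
  rw [← h]
  push_cast
  ring

lemma sum_w (r : ℕ) (x : Fin n → ℝ) :
    ∑ α ∈ Finset.Nat.antidiagonalTuple n r, w n r α * ∏ i, x i ^ α i
      = (∑ i, x i) ^ r := by
  rw [← Finset.piAntidiag_univ_fin_eq_antidiagonalTuple, Finset.sum_pow_eq_sum_piAntidiag]
  apply Finset.sum_congr rfl
  intro α hα
  rw [Finset.mem_piAntidiag] at hα
  rw [w_eq hα.1]

lemma falling_moment (r : ℕ) (d : Fin n → ℕ) (x : Fin n → ℝ) :
    ∑ α ∈ Finset.Nat.antidiagonalTuple n r,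
      w n r α * ((∏ i, ((α i).descFactorial (d i) : ℝ)) * ∏ i, x i ^ α i)
    = (r.descFactorial (∑ i, d i) : ℝ) * (∏ i, x i ^ d i) *
        (∑ i, x i) ^ (r - ∑ i, d i) := by
  by_cases hm : (∑ i, d i) ≤ r
  · classical
    rw [← Finset.sum_filter_add_sum_filter_not (Finset.Nat.antidiagonalTuple n r)
      (fun α => ∀ i, d i ≤ α i)]
    have hz : ∑ α ∈ (Finset.Nat.antidiagonalTuple n r).filter (fun α => ¬ ∀ i, d i ≤ α i),
        w n r α * ((∏ i, ((α i).descFactorial (d i) : ℝ)) * ∏ i, x i ^ α i) = 0 := by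
      apply Finset.sum_eq_zero
      intro α hα
      rw [Finset.mem_filter] at hα
      push_neg at hα
      obtain ⟨i, hi⟩ := hα.2
      have : ((α i).descFactorial (d i) : ℝ) = 0 := by
        rw [Nat.descFactorial_eq_zero_iff_lt.2 hi, Nat.cast_zero]
      rw [Finset.prod_eq_zero (Finset.mem_univ i) this]
      ring
    rw [hz, add_zero]
    have key : ∑ α ∈ (Finset.Nat.antidiagonalTuple n r).filter (fun α => ∀ i, d i ≤ α i),
        w n r α * ((∏ i, ((α i).descFactorial (d i) : ℝ)) * ∏ i, x i ^ α i)
        = ∑ β ∈ Finset.Nat.antidiagonalTuple n (r - ∑ i, d i),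
            (r.descFactorial (∑ i, d i) : ℝ) * (∏ i, x i ^ d i) *
              (w n (r - ∑ i, d i) β * ∏ i, x i ^ β i) := by
      apply Finset.sum_nbij' (fun α t => α t - d t) (fun β t => β t + d t)
      · intro α hα
        rw [Finset.mem_filter, Finset.Nat.mem_antidiagonalTuple] at hα
        rw [Finset.Nat.mem_antidiagonalTuple]
        have : ∑ t, (α t - d t) + ∑ t, d t = ∑ t, α t := by
          rw [← Finset.sum_add_distrib]
          apply Finset.sum_congr rfl
          intro t _
          have := hα.2 t
          omega
        omega
      · intro β hβ
        rw [Finset.Nat.mem_antidiagonalTuple] at hβ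
        rw [Finset.mem_filter, Finset.Nat.mem_antidiagonalTuple]
        constructor
        · rw [Finset.sum_add_distrib, hβ]
          omega
        · intro i
          show d i ≤ β i + d i
          omega
      · intro α hα
        rw [Finset.mem_filter] at hα
        funext t
        show α t - d t + d t = α t
        have := hα.2 t
        omega
      · intro β _
        funext t
        show β t + d t - d t = β t
        omega
      · intro α hα
        rw [Finset.mem_filter, Finset.Nat.mem_antidiagonalTuple] at hα
        obtain ⟨hsum, hle⟩ := hα
        -- per-term computation
        have hfac : ∀ t, ((α t).factorial : ℝ)
            = ((α t - d t).factorial : ℝ) * ((α t).descFactorial (d t) : ℝ) := by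
          intro t
          rw [← Nat.cast_mul, Nat.factorial_mul_descFactorial (hle t)]
        have hrfac : (r.factorial : ℝ)
            = ((r - ∑ i, d i).factorial : ℝ) * (r.descFactorial (∑ i, d i) : ℝ) := by
          rw [← Nat.cast_mul, Nat.factorial_mul_descFactorial hm]
        have hxpow : ∀ t, x t ^ α t = x t ^ d t * x t ^ (α t - d t) := by
          intro t
          rw [← pow_add]
          congr 1
          have := hle t
          omega
        have hdesc_ne : (∏ i, ((α i).descFactorial (d i) : ℝ)) ≠ 0 := by
          apply Finset.prod_ne_zero_iff.2
          intro i _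
          have h0 : (α i).descFactorial (d i) ≠ 0 := by
            rw [Ne, Nat.descFactorial_eq_zero_iff_lt]
            have := hle i
            omega
          exact Nat.cast_ne_zero.mpr h0
        have hfacprod_ne : ∀ (g : Fin n → ℕ), (∏ i, ((g i).factorial : ℝ)) ≠ 0 := by
          intro g
          apply Finset.prod_ne_zero_iff.2
          intro i _
          exact_mod_cast (Nat.factorial_pos _).ne'
        rw [w, w]
        rw [Finset.prod_congr rfl (fun t _ => hfac t), Finset.prod_mul_distrib]
        rw [Finset.prod_congr rfl (fun t _ => hxpow t), Finset.prod_mul_distrib]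
        rw [hrfac]
        field_simp
    rw [key, ← Finset.mul_sum, sum_w]
  · push_neg at hm
    rw [Nat.descFactorial_eq_zero_iff_lt.2 hm]
    push_cast
    rw [zero_mul, zero_mul]
    apply Finset.sum_eq_zero
    intro α hα
    rw [Finset.Nat.mem_antidiagonalTuple] at hα
    have : ∃ i, α i < d i := by
      by_contra hcon
      push_neg at hcon
      have := Finset.sum_le_sum (s := (univ : Finset (Fin n))) (fun i _ => hcon i)
      omega
    obtain ⟨i, hi⟩ := this
    have : ((α i).descFactorial (d i) : ℝ) = 0 := by
      rw [Nat.descFactorial_eq_zero_iff_lt.2 hi, Nat.cast_zero]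
    rw [Finset.prod_eq_zero (Finset.mem_univ i) this]
    ring


lemma cast_desc1 (a : ℕ) : ((a.descFactorial 1 : ℕ) : ℝ) = a := by
  simp [Nat.descFactorial]

lemma cast_sq (a : ℕ) : ((a : ℝ))^2 = (a.descFactorial 2 : ℝ) + a := by
  rcases a with _ | a' <;> simp [Nat.descFactorial] <;> push_cast <;> ring

lemma cast_cube (a : ℕ) :
    ((a : ℝ))^3 = (a.descFactorial 3 : ℝ) + 3*(a.descFactorial 2 : ℝ) + a := by
  rcases a with _ | _ | a' <;> simp [Nat.descFactorial] <;> push_cast <;> ring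


lemma mom1 (r : ℕ) (x : Fin n → ℝ) (hx1 : ∑ i, x i = 1) (i : Fin n) (a : ℕ) :
    ∑ α ∈ Finset.Nat.antidiagonalTuple n r,
      w n r α * (((α i).descFactorial a : ℝ) * ∏ t, x t ^ α t)
    = (r.descFactorial a : ℝ) * x i ^ a := by
  have h := falling_moment r (fun t => if t = i then a else 0) x
  have hsum : (∑ t, if t = i then a else 0) = a := by simp
  have hprod : ∀ (f : Fin n → ℕ → ℝ), (∀ t, f t 0 = 1) →
      (∏ t, f t (if t = i then a else 0)) = f i a := by
    intro f hf
    rw [Finset.prod_congr rfl (fun t (_ : t ∈ univ) =>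
        show f t (if t = i then a else 0) = (if t = i then f t a else 1) by
          by_cases h1 : t = i <;> simp_all)]
    rw [Finset.prod_ite_eq' univ i (fun t => f t a)]
    simp
  rw [hsum] at h
  rw [hprod (fun t m => x t ^ m) (fun t => pow_zero _), hx1, one_pow, mul_one] at h
  rw [← h]
  apply Finset.sum_congr rfl
  intro α _
  congr 2
  rw [hprod (fun t m => ((α t).descFactorial m : ℝ)) (fun t => by simp [Nat.descFactorial])]

lemma mom2 (r : ℕ) (x : Fin n → ℝ) (hx1 : ∑ i, x i = 1) {i j : Fin n} (hij : i ≠ j)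
    (a b : ℕ) :
    ∑ α ∈ Finset.Nat.antidiagonalTuple n r,
      w n r α * ((((α i).descFactorial a : ℝ) * ((α j).descFactorial b : ℝ))
        * ∏ t, x t ^ α t)
    = (r.descFactorial (a + b) : ℝ) * (x i ^ a * x j ^ b) := by
  have h := falling_moment r (fun t => if t = i then a else if t = j then b else 0) x
  have hsum : (∑ t, if t = i then a else if t = j then b else 0) = a + b := by
    rw [Finset.sum_congr rfl (fun t (_ : t ∈ univ) => show (if t = i then a else if t = j then b else 0)
        = (if t = i then a else 0) + (if t = j then b else 0) by
          by_cases h1 : t = i <;> by_cases h2 : t = j <;> simp_all)]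
    rw [Finset.sum_add_distrib]
    simp
  have hprod : ∀ (f : Fin n → ℕ → ℝ), (∀ t, f t 0 = 1) →
      (∏ t, f t (if t = i then a else if t = j then b else 0)) = f i a * f j b := by
    intro f hf
    rw [Finset.prod_congr rfl (fun t (_ : t ∈ univ) =>
        show f t (if t = i then a else if t = j then b else 0)
        = (if t = i then f t a else 1) * (if t = j then f t b else 1) by
          by_cases h1 : t = i <;> by_cases h2 : t = j <;> simp_all)]
    rw [Finset.prod_mul_distrib, Finset.prod_ite_eq' univ i (fun t => f t a),
      Finset.prod_ite_eq' univ j (fun t => f t b)]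
    simp
  rw [hsum] at h
  rw [hprod (fun t m => x t ^ m) (fun t => pow_zero _), hx1, one_pow, mul_one] at h
  rw [← h]
  apply Finset.sum_congr rfl
  intro α _
  congr 2
  rw [hprod (fun t m => ((α t).descFactorial m : ℝ)) (fun t => by simp [Nat.descFactorial])]

lemma mom3 (r : ℕ) (x : Fin n → ℝ) (hx1 : ∑ i, x i = 1) {i j k : Fin n}
    (hij : i ≠ j) (hik : i ≠ k) (hjk : j ≠ k) :
    ∑ α ∈ Finset.Nat.antidiagonalTuple n r,
      w n r α * (((α i : ℝ) * (α j : ℝ) * (α k : ℝ)) * ∏ t, x t ^ α t)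
    = (r.descFactorial 3 : ℝ) * (x i * x j * x k) := by
  have h := falling_moment r
    (fun t => if t = i then 1 else if t = j then 1 else if t = k then 1 else 0) x
  have hsum : (∑ t, if t = i then 1 else if t = j then 1 else if t = k then 1 else 0) = 3 := by
    rw [Finset.sum_congr rfl (fun t (_ : t ∈ univ) =>
        show (if t = i then 1 else if t = j then 1 else if t = k then 1 else 0)
        = (if t = i then 1 else 0) + (if t = j then 1 else 0) + (if t = k then 1 else 0) by
          by_cases h1 : t = i <;> by_cases h2 : t = j <;> by_cases h3 : t = k <;> simp_all)]
    rw [Finset.sum_add_distrib, Finset.sum_add_distrib]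
    simp
  have hprod : ∀ (f : Fin n → ℕ → ℝ), (∀ t, f t 0 = 1) →
      (∏ t, f t (if t = i then 1 else if t = j then 1 else if t = k then 1 else 0))
        = f i 1 * f j 1 * f k 1 := by
    intro f hf
    rw [Finset.prod_congr rfl (fun t (_ : t ∈ univ) =>
        show f t (if t = i then 1 else if t = j then 1 else if t = k then 1 else 0)
        = (if t = i then f t 1 else 1) * (if t = j then f t 1 else 1)
            * (if t = k then f t 1 else 1) by
          by_cases h1 : t = i <;> by_cases h2 : t = j <;> by_cases h3 : t = k <;> simp_all)]
    rw [Finset.prod_mul_distrib, Finset.prod_mul_distrib,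
      Finset.prod_ite_eq' univ i (fun t => f t 1),
      Finset.prod_ite_eq' univ j (fun t => f t 1),
      Finset.prod_ite_eq' univ k (fun t => f t 1)]
    simp
  rw [hsum] at h
  rw [hprod (fun t m => x t ^ m) (fun t => pow_zero _), hx1, one_pow, mul_one] at h
  simp only [pow_one] at h
  rw [← h]
  apply Finset.sum_congr rfl
  intro α _
  congr 2
  rw [hprod (fun t m => ((α t).descFactorial m : ℝ)) (fun t => by simp [Nat.descFactorial])]
  simp [Nat.descFactorial]

lemma mom3gen (r : ℕ) (x : Fin n → ℝ) (hx1 : ∑ i, x i = 1) (i j k : Fin n) :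
    ∑ α ∈ Finset.Nat.antidiagonalTuple n r,
      w n r α * (((α i : ℝ) * (α j : ℝ) * (α k : ℝ)) * ∏ t, x t ^ α t)
    = (r.descFactorial 3 : ℝ) * (x i * x j * x k)
      + (r.descFactorial 2 : ℝ) *
          (((if i = k then (1:ℝ) else 0) + (if j = k then (1:ℝ) else 0)) * (x i * x j)
            + (if i = j then (1:ℝ) else 0) * (x i * x k))
      + (r : ℝ) * ((if i = j then (1:ℝ) else 0) * (if i = k then (1:ℝ) else 0) * x i) := by
  have hd2 : ∀ a : ℕ, ((a.descFactorial 2 : ℕ) : ℝ) = ((a:ℝ))^2 - a := by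
    intro a; have := cast_sq a; linarith
  rcases eq_or_ne i j with hij | hij
  · subst hij
    rcases eq_or_ne i k with hik | hik
    · subst hik
      have split : ∑ α ∈ Finset.Nat.antidiagonalTuple n r,
          w n r α * (((α i : ℝ) * (α i : ℝ) * (α i : ℝ)) * ∏ t, x t ^ α t)
          = ∑ α ∈ Finset.Nat.antidiagonalTuple n r,
            (w n r α * (((α i).descFactorial 3 : ℝ) * ∏ t, x t ^ α t)
              + (3 * (w n r α * (((α i).descFactorial 2 : ℝ) * ∏ t, x t ^ α t))
                + w n r α * (((α i).descFactorial 1 : ℝ) * ∏ t, x t ^ α t))) := by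
        apply Finset.sum_congr rfl
        intro α _
        rw [cast_desc1, hd2, show (((α i).descFactorial 3 : ℕ) : ℝ)
          = ((α i : ℝ))^3 - 3*(((α i:ℝ))^2 - (α i:ℝ)) - (α i : ℝ) from by
            have := cast_cube (α i); have := hd2 (α i); linarith]
        ring
      rw [split, Finset.sum_add_distrib, Finset.sum_add_distrib, ← Finset.mul_sum,
        mom1 r x hx1 i 3, mom1 r x hx1 i 2, mom1 r x hx1 i 1, cast_desc1]
      simp
      ring
    · have split : ∑ α ∈ Finset.Nat.antidiagonalTuple n r,
          w n r α * (((α i : ℝ) * (α i : ℝ) * (α k : ℝ)) * ∏ t, x t ^ α t)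
          = ∑ α ∈ Finset.Nat.antidiagonalTuple n r,
            (w n r α * ((((α i).descFactorial 2 : ℝ) * ((α k).descFactorial 1 : ℝ))
                * ∏ t, x t ^ α t)
              + w n r α * ((((α i).descFactorial 1 : ℝ) * ((α k).descFactorial 1 : ℝ))
                * ∏ t, x t ^ α t)) := by
        apply Finset.sum_congr rfl
        intro α _
        rw [cast_desc1, cast_desc1, hd2]
        ring
      rw [split, Finset.sum_add_distrib, mom2 r x hx1 hik 2 1, mom2 r x hx1 hik 1 1]
      simp only [if_neg hik, eq_self_iff_true, if_true]
      ring
  · rcases eq_or_ne i k with hik | hik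
    · subst hik
      have hjk : j ≠ i := hij.symm
      have split : ∑ α ∈ Finset.Nat.antidiagonalTuple n r,
          w n r α * (((α i : ℝ) * (α j : ℝ) * (α i : ℝ)) * ∏ t, x t ^ α t)
          = ∑ α ∈ Finset.Nat.antidiagonalTuple n r,
            (w n r α * ((((α i).descFactorial 2 : ℝ) * ((α j).descFactorial 1 : ℝ))
                * ∏ t, x t ^ α t)
              + w n r α * ((((α i).descFactorial 1 : ℝ) * ((α j).descFactorial 1 : ℝ))
                * ∏ t, x t ^ α t)) := by
        apply Finset.sum_congr rfl
        intro α _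
        rw [cast_desc1, cast_desc1, hd2]
        ring
      rw [split, Finset.sum_add_distrib, mom2 r x hx1 hij 2 1, mom2 r x hx1 hij 1 1]
      simp only [if_neg hij, if_neg hjk, eq_self_iff_true, if_true]
      ring
    · rcases eq_or_ne j k with hjk | hjk
      · subst hjk
        have split : ∑ α ∈ Finset.Nat.antidiagonalTuple n r,
            w n r α * (((α i : ℝ) * (α j : ℝ) * (α j : ℝ)) * ∏ t, x t ^ α t)
            = ∑ α ∈ Finset.Nat.antidiagonalTuple n r,
              (w n r α * ((((α i).descFactorial 1 : ℝ) * ((α j).descFactorial 2 : ℝ))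
                  * ∏ t, x t ^ α t)
                + w n r α * ((((α i).descFactorial 1 : ℝ) * ((α j).descFactorial 1 : ℝ))
                  * ∏ t, x t ^ α t)) := by
          apply Finset.sum_congr rfl
          intro α _
          rw [cast_desc1, cast_desc1, hd2]
          ring
        rw [split, Finset.sum_add_distrib, mom2 r x hx1 hij 1 2, mom2 r x hx1 hij 1 1]
        simp only [if_neg hij, eq_self_iff_true, if_true]
        ring
      · have split : ∑ α ∈ Finset.Nat.antidiagonalTuple n r,
            w n r α * (((α i : ℝ) * (α j : ℝ) * (α k : ℝ)) * ∏ t, x t ^ α t)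
            = ∑ α ∈ Finset.Nat.antidiagonalTuple n r,
              w n r α * (((α i : ℝ) * (α j : ℝ) * (α k : ℝ)) * ∏ t, x t ^ α t) := rfl
        rw [split, mom3 r x hx1 hij hik hjk]
        simp only [if_neg hij, if_neg hik, if_neg hjk]
        ring

lemma bern_monomial (r : ℕ) (x : Fin n → ℝ) (hx1 : ∑ i, x i = 1) (i j k : Fin n) :
    bern r (fun y => y i * y j * y k) x
    = (1/(r:ℝ)^3) * ((r.descFactorial 3 : ℝ) * (x i * x j * x k)
      + (r.descFactorial 2 : ℝ) *
          (((if i = k then (1:ℝ) else 0) + (if j = k then (1:ℝ) else 0)) * (x i * x j)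
            + (if i = j then (1:ℝ) else 0) * (x i * x k))
      + (r : ℝ) * ((if i = j then (1:ℝ) else 0) * (if i = k then (1:ℝ) else 0) * x i)) := by
  rw [← mom3gen r x hx1 i j k, bern, Finset.mul_sum]
  apply Finset.sum_congr rfl
  intro α _
  show ((α i : ℝ)/r * ((α j : ℝ)/r) * ((α k : ℝ)/r)) * _ * _ = _
  rw [w]
  field_simp

lemma cast_desc3' (r : ℕ) : ((r.descFactorial 3 : ℕ) : ℝ)
    = (r:ℝ)^3 - 3*(r:ℝ)^2 + 2*(r:ℝ) := by
  rcases r with _ | _ | r' <;> simp [Nat.descFactorial] <;> push_cast <;> ring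

lemma cast_desc2' (r : ℕ) : ((r.descFactorial 2 : ℕ) : ℝ) = (r:ℝ)^2 - (r:ℝ) := by
  rcases r with _ | r' <;> simp [Nat.descFactorial] <;> push_cast <;> ring

lemma monomial_id (r : ℕ) (hr : 2 ≤ r) (x : Fin n → ℝ) (hx1 : ∑ i, x i = 1)
    (i j k : Fin n) :
    (r:ℝ)^2 * bern r (fun y => y i * y j * y k) x
    = ((r:ℝ)-1)*((r:ℝ)-2) * (x i * x j * x k)
      + 4*((r:ℝ)-1) * bern 2 (fun y => y i * y j * y k) x
      + (2-(r:ℝ)) * ((if i = j then (1:ℝ) else 0) * (if i = k then (1:ℝ) else 0) * x i) := by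
  have hr0 : (r:ℝ) ≠ 0 := Nat.cast_ne_zero.mpr (by omega)
  rw [bern_monomial r x hx1 i j k, bern_monomial 2 x hx1 i j k,
    cast_desc3' r, cast_desc2' r]
  set Dik := (if i = k then (1:ℝ) else 0) with hDik
  set Djk := (if j = k then (1:ℝ) else 0) with hDjk
  set Dij := (if i = j then (1:ℝ) else 0) with hDij
  norm_num [Nat.descFactorial]
  field_simp
  ring


lemma bern_sum {ι : Type*} (r : ℕ) (x : Fin n → ℝ) (s : Finset ι) (c : ι → ℝ)
    (g : ι → (Fin n → ℝ) → ℝ) :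
    bern r (fun y => ∑ d ∈ s, c d * g d y) x = ∑ d ∈ s, c d * bern r (g d) x := by
  unfold bern
  have step1 : ∑ α ∈ Finset.Nat.antidiagonalTuple n r,
      (∑ d ∈ s, c d * g d (fun i => (α i : ℝ) / r)) *
        ((r.factorial : ℝ) / ∏ i, ((α i).factorial : ℝ)) * ∏ i, x i ^ α i
      = ∑ α ∈ Finset.Nat.antidiagonalTuple n r, ∑ d ∈ s,
          c d * (g d (fun i => (α i : ℝ) / r) *
            ((r.factorial : ℝ) / ∏ i, ((α i).factorial : ℝ)) * ∏ i, x i ^ α i) := by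
    apply Finset.sum_congr rfl
    intro α _
    rw [Finset.sum_mul, Finset.sum_mul]
    apply Finset.sum_congr rfl
    intro d _
    ring
  rw [step1, Finset.sum_comm]
  apply Finset.sum_congr rfl
  intro d _
  rw [Finset.mul_sum]

lemma exists_triple (d : Fin n → ℕ) (hd : ∑ t, d t = 3) :
    ∃ i j k : Fin n, ∀ t, d t = (if t = i then 1 else 0) + (if t = j then 1 else 0)
      + (if t = k then 1 else 0) := by
  have peel : ∀ (m : ℕ) (e : Fin n → ℕ), ∑ t, e t = m + 1 →
      ∃ (i : Fin n) (e' : Fin n → ℕ),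
        (∀ t, e t = (if t = i then 1 else 0) + e' t) ∧ ∑ t, e' t = m := by
    intro m e he
    have hne : ∃ i, e i ≠ 0 := by
      by_contra hcon
      push_neg at hcon
      rw [Finset.sum_congr rfl (fun t _ => hcon t)] at he
      simp at he
    obtain ⟨i, hi⟩ := hne
    refine ⟨i, fun t => e t - (if t = i then 1 else 0), fun t => ?_, ?_⟩
    · by_cases ht : t = i <;> simp [ht] <;> omega
    · have : ∑ t, (e t - if t = i then 1 else 0) + ∑ t, (if t = i then (1:ℕ) else 0)
          = ∑ t, e t := by
        rw [← Finset.sum_add_distrib]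
        apply Finset.sum_congr rfl
        intro t _
        by_cases ht : t = i <;> simp [ht] <;> omega
      simp only [Finset.sum_ite_eq', Finset.mem_univ, if_true] at this
      show ∑ t, (e t - if t = i then 1 else 0) = m
      omega
  obtain ⟨i, e1, h1, he1⟩ := peel 2 d hd
  obtain ⟨j, e2, h2, he2⟩ := peel 1 e1 he1
  obtain ⟨k, e3, h3, he3⟩ := peel 0 e2 he2
  have he3' : ∀ t, e3 t = 0 := by
    intro t
    have := Finset.sum_eq_zero_iff.1 he3 t (Finset.mem_univ t)
    exact this
  exact ⟨i, j, k, fun t => by rw [h1 t, h2 t, h3 t, he3' t]; omega⟩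

lemma prod_pow_triple (d : Fin n → ℕ) (i j k : Fin n)
    (hd : ∀ t, d t = (if t = i then 1 else 0) + (if t = j then 1 else 0)
      + (if t = k then 1 else 0)) (y : Fin n → ℝ) :
    ∏ t, y t ^ d t = y i * y j * y k := by
  rw [Finset.prod_congr rfl (fun t (_ : t ∈ univ) => show y t ^ d t
      = (if t = i then y t else 1) * (if t = j then y t else 1) * (if t = k then y t else 1) by
    rw [hd t, pow_add, pow_add]
    by_cases h1 : t = i <;> by_cases h2 : t = j <;> by_cases h3 : t = k <;> simp [h1, h2, h3])]
  rw [Finset.prod_mul_distrib, Finset.prod_mul_distrib,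
    Finset.prod_ite_eq' univ i y, Finset.prod_ite_eq' univ j y, Finset.prod_ite_eq' univ k y]
  simp

lemma vertex_sum (x : Fin n → ℝ) (i j k : Fin n) :
    ∑ c, x c * ((if i = c then (1:ℝ) else 0) * (if j = c then (1:ℝ) else 0)
      * (if k = c then (1:ℝ) else 0))
    = (if i = j then (1:ℝ) else 0) * (if i = k then (1:ℝ) else 0) * x i := by
  have key : ∀ c : Fin n, x c * ((if i = c then (1:ℝ) else 0) * (if j = c then (1:ℝ) else 0)
      * (if k = c then (1:ℝ) else 0))
      = if c = i then ((if i = j then (1:ℝ) else 0) * (if i = k then (1:ℝ) else 0) * x i)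
        else 0 := by
    intro c
    split_ifs <;> subst_vars <;> simp_all
  rw [Finset.sum_congr rfl (fun c _ => key c)]
  simp

open MvPolynomial in
lemma main_id (r : ℕ) (hr : 2 ≤ r) (p : MvPolynomial (Fin n) ℝ) (hp : p.IsHomogeneous 3)
    (x : Fin n → ℝ) (hx1 : ∑ i, x i = 1) :
    (r:ℝ)^2 * bern r (fun y => eval y p) x
    = ((r:ℝ)-1)*((r:ℝ)-2) * eval x p
      + 4*((r:ℝ)-1) * bern 2 (fun y => eval y p) x
      + (2-(r:ℝ)) * ∑ c, x c * eval (fun t => if t = c then (1:ℝ) else 0) p := by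
  have hfun : (fun y : Fin n → ℝ => eval y p)
      = fun y => ∑ d ∈ p.support, coeff d p * ∏ t, y t ^ d t :=
    funext fun y => eval_eq' y p
  have hdeg : ∀ d ∈ p.support, ∑ t, (d : Fin n →₀ ℕ) t = 3 := by
    intro d hd
    have hc := hp (mem_support_iff.1 hd)
    rw [Finsupp.weight_apply] at hc
    simp only [Pi.one_apply, smul_eq_mul, mul_one] at hc
    rw [← hc]
    symm
    apply Finset.sum_subset (Finset.subset_univ _)
    intro t _ ht
    exact Finsupp.notMem_support_iff.mp ht
  rw [hfun, bern_sum, bern_sum, eval_eq' x p]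
  have hvert : ∀ c : Fin n,
      eval (fun t => if t = c then (1:ℝ) else 0) p
        = ∑ d ∈ p.support, coeff d p * ∏ t, (if t = c then (1:ℝ) else 0) ^ d t :=
    fun c => eval_eq' _ p
  rw [Finset.sum_congr rfl (fun c (_ : c ∈ univ) => by rw [hvert c, Finset.mul_sum]),
    Finset.sum_comm]
  simp only [Finset.mul_sum]
  rw [← Finset.sum_add_distrib, ← Finset.sum_add_distrib]
  apply Finset.sum_congr rfl
  intro d hd
  obtain ⟨i, j, k, hijk⟩ := exists_triple (fun t => d t) (hdeg d hd)
  have hg : (fun y : Fin n → ℝ => ∏ t, y t ^ d t) = fun y => y i * y j * y k :=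
    funext fun y => prod_pow_triple _ i j k hijk y
  have hx' : ∏ t, x t ^ (d : Fin n →₀ ℕ) t = x i * x j * x k :=
    prod_pow_triple _ i j k hijk x
  have hv : ∀ c : Fin n, ∏ t, (if t = c then (1:ℝ) else 0) ^ (d : Fin n →₀ ℕ) t
      = (if i = c then (1:ℝ) else 0) * (if j = c then (1:ℝ) else 0)
        * (if k = c then (1:ℝ) else 0) :=
    fun c => prod_pow_triple _ i j k hijk (fun t => if t = c then (1:ℝ) else 0)
  rw [hg, hx']
  have hinner : ∑ c, (2-(r:ℝ)) * (x c * (coeff d p *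
      ∏ t, (if t = c then (1:ℝ) else 0) ^ (d : Fin n →₀ ℕ) t))
      = (2-(r:ℝ)) * (coeff d p *
          ((if i = j then (1:ℝ) else 0) * (if i = k then (1:ℝ) else 0) * x i)) := by
    rw [Finset.sum_congr rfl (fun c (_ : c ∈ univ) => by rw [hv c])]
    rw [← vertex_sum x i j k, Finset.mul_sum, ← Finset.mul_sum]
    congr 1
    apply Finset.sum_congr rfl
    intro c _
    ring
  rw [hinner]
  have key := monomial_id r hr x hx1 i j k
  linear_combination (coeff d p) * key

lemma sum_w' (r : ℕ) (x : Fin n → ℝ) :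
    ∑ α ∈ Finset.Nat.antidiagonalTuple n r,
      ((r.factorial : ℝ) / ∏ i, ((α i).factorial : ℝ)) * ∏ i, x i ^ α i
      = (∑ i, x i) ^ r := by
  have h := sum_w r x
  simp only [w] at h
  exact h

lemma grid_mem (r : ℕ) (hr : r ≠ 0) (α : Fin n → ℕ)
    (hα : α ∈ Finset.Nat.antidiagonalTuple n r) :
    (fun i => (α i : ℝ) / r) ∈ stdSimplex ℝ (Fin n) := by
  rw [Finset.Nat.mem_antidiagonalTuple] at hα
  constructor
  · intro i
    positivity
  · rw [← Finset.sum_div]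
    rw [show (∑ i, ((α i : ℕ) : ℝ)) = ((∑ i, α i : ℕ) : ℝ) by push_cast; rfl, hα]
    field_simp

lemma bern_le (r : ℕ) (hr : r ≠ 0) (f : (Fin n → ℝ) → ℝ) (x : Fin n → ℝ)
    (hx : x ∈ stdSimplex ℝ (Fin n)) (M : ℝ)
    (hM : ∀ y ∈ stdSimplex ℝ (Fin n), f y ≤ M) : bern r f x ≤ M := by
  have hWX : ∀ α : Fin n → ℕ, 0 ≤ ((r.factorial : ℝ) / ∏ i, ((α i).factorial : ℝ))
      * ∏ i, x i ^ α i := by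
    intro α
    apply mul_nonneg
    · positivity
    · exact Finset.prod_nonneg fun i _ => pow_nonneg (hx.1 i) _
  calc bern r f x ≤ ∑ α ∈ Finset.Nat.antidiagonalTuple n r,
        M * (((r.factorial : ℝ) / ∏ i, ((α i).factorial : ℝ)) * ∏ i, x i ^ α i) := by
        apply Finset.sum_le_sum
        intro α hα
        rw [mul_assoc]
        exact mul_le_mul_of_nonneg_right (hM _ (grid_mem r hr α hα)) (hWX α)
    _ = M := by
        rw [← Finset.mul_sum, sum_w' r x, hx.2, one_pow, mul_one]


end Stmt9Aux

open Stmt9Aux in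
theorem stmt9 (n r : ℕ) (hr : 2 ≤ r) (p : MvPolynomial (Fin n) ℝ)
    (hp : p.IsHomogeneous 3) (fmin fmax : ℝ)
    (hmin : IsLeast ((fun y => MvPolynomial.eval y p) '' stdSimplex ℝ (Fin n)) fmin)
    (hmax : IsGreatest ((fun y => MvPolynomial.eval y p) '' stdSimplex ℝ (Fin n)) fmax)
    (x : Fin n → ℝ) (hx : x ∈ stdSimplex ℝ (Fin n)) :
    bern r (fun y => MvPolynomial.eval y p) x - MvPolynomial.eval x p
      ≤ (4 / r - 4 / (r : ℝ) ^ 2) * (fmax - fmin) := by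
  have hx1 : ∑ i, x i = 1 := hx.2
  have key := main_id r hr p hp x hx1
  have hrR : (2:ℝ) ≤ (r:ℝ) := by exact_mod_cast hr
  have hr0 : (0:ℝ) < (r:ℝ) := by linarith
  have hfmin : fmin ≤ MvPolynomial.eval x p := hmin.2 ⟨x, hx, rfl⟩
  have hb2 : bern 2 (fun y => MvPolynomial.eval y p) x ≤ fmax :=
    bern_le 2 (by norm_num) _ x hx fmax (fun y hy => hmax.2 ⟨y, hy, rfl⟩)
  have hvertmem : ∀ c : Fin n, (fun t => if t = c then (1:ℝ) else 0) ∈ stdSimplex ℝ (Fin n) := by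
    intro c
    constructor
    · intro i
      show (0:ℝ) ≤ if i = c then 1 else 0
      split_ifs <;> norm_num
    · show (∑ t, if t = c then (1:ℝ) else 0) = 1
      simp
  have hh : fmin ≤ ∑ c, x c * MvPolynomial.eval (fun t => if t = c then (1:ℝ) else 0) p := by
    calc fmin = ∑ c, x c * fmin := by rw [← Finset.sum_mul, hx1, one_mul]
      _ ≤ _ := by
          apply Finset.sum_le_sum
          intro c _
          exact mul_le_mul_of_nonneg_left (hmin.2 ⟨_, hvertmem c, rfl⟩) (hx.1 c)
  rw [show (4 / (r:ℝ) - 4 / (r : ℝ) ^ 2) * (fmax - fmin)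
      = ((4*(r:ℝ) - 4) * (fmax - fmin)) / (r:ℝ)^2 by field_simp]
  rw [sub_le_iff_le_add, div_add' _ _ _ (by positivity), le_div_iff₀ (by positivity : (0:ℝ) < (r:ℝ)^2)]
  nlinarith [key, mul_le_mul_of_nonneg_left hb2 (show (0:ℝ) ≤ 4*((r:ℝ)-1) by linarith),
    mul_le_mul_of_nonneg_left hfmin (show (0:ℝ) ≤ (r:ℝ)-2 by linarith),
    mul_le_mul_of_nonneg_left hh (show (0:ℝ) ≤ (r:ℝ)-2 by linarith),
    mul_le_mul_of_nonneg_left hfmin (show (0:ℝ) ≤ ((r:ℝ)-1)*((r:ℝ)-2) by nlinarith)]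
end

section
/- For any subset I ⊆ [n] with |I| = d, any integer r ≥ 1, and any x ∈ Δ_n, the Bernstein approximation of the square-free monomial x^I = Π_{i∈I} x_i satisfies B_r(x^I)(x) = (r·(r−1)···(r−d+1)/r^d)·x^I. -/
theorem stmt11 (n r d : ℕ) (hr : 1 ≤ r) (I : Finset (Fin n)) (hI : I.card = d)
    (x : Fin n → ℝ) (hx : x ∈ stdSimplex ℝ (Fin n)) :
    bern r (fun y => ∏ i ∈ I, y i) x
      = ((r.descFactorial d : ℝ) / (r : ℝ) ^ d) * ∏ i ∈ I, x i := by
  classical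
  unfold bern
  rw [← Finset.piAntidiag_univ_fin_eq_antidiagonalTuple]
  rcases lt_or_ge r d with hrd | hdr
  · -- r < d : both sides vanish
    rw [Nat.descFactorial_eq_zero_iff_lt.2 hrd]
    simp only [Nat.cast_zero, zero_div, zero_mul]
    apply Finset.sum_eq_zero
    intro α hα
    rw [Finset.mem_piAntidiag] at hα
    -- some i ∈ I has α i = 0
    have : ∃ i ∈ I, α i = 0 := by
      by_contra h
      push_neg at h
      have h1 : ∀ i ∈ I, 1 ≤ α i := fun i hi => Nat.one_le_iff_ne_zero.2 (h i hi)
      have : d ≤ r := by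
        calc d = ∑ _i ∈ I, 1 := by simp [hI]
        _ ≤ ∑ i ∈ I, α i := Finset.sum_le_sum h1
        _ ≤ ∑ i, α i := Finset.sum_le_sum_of_subset (Finset.subset_univ I)
        _ = r := hα.1
      omega
    obtain ⟨i, hi, h0⟩ := this
    have : (∏ j ∈ I, (α j : ℝ) / r) = 0 :=
      Finset.prod_eq_zero hi (by simp [h0])
    rw [this, zero_mul, zero_mul]
  · -- d ≤ r
    have hrpos : (0:ℝ) < r := by positivity
    -- split off vanishing terms
    rw [← Finset.sum_filter_add_sum_filter_not _ (fun α => ∀ i ∈ I, 1 ≤ α i)]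
    have hvanish : ∑ α ∈ (Finset.piAntidiag Finset.univ r).filter
        (fun α => ¬ ∀ i ∈ I, 1 ≤ α i),
        (∏ i ∈ I, (α i : ℝ) / r) * ((r.factorial : ℝ) / ∏ i, ((α i).factorial : ℝ)) *
          ∏ i, x i ^ α i = 0 := by
      apply Finset.sum_eq_zero
      intro α hα
      rw [Finset.mem_filter] at hα
      push_neg at hα
      obtain ⟨i, hi, h0⟩ := hα.2
      have h0 : α i = 0 := by omega
      have : (∏ j ∈ I, (α j : ℝ) / r) = 0 :=
        Finset.prod_eq_zero hi (by simp [h0])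
      rw [this, zero_mul, zero_mul]
    rw [hvanish, add_zero]
    -- bijection with piAntidiag univ (r - d)
    have key : ∑ α ∈ (Finset.piAntidiag Finset.univ r).filter
        (fun α => ∀ i ∈ I, 1 ≤ α i),
        (∏ i ∈ I, (α i : ℝ) / r) * ((r.factorial : ℝ) / ∏ i, ((α i).factorial : ℝ)) *
          ∏ i, x i ^ α i
        = ∑ β ∈ Finset.piAntidiag Finset.univ (r - d),
          ((r.descFactorial d : ℝ) / (r : ℝ) ^ d) * (∏ i ∈ I, x i) *
            ((Nat.multinomial Finset.univ β : ℝ) * ∏ i, x i ^ β i) := by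
      refine Finset.sum_nbij' (fun α i => α i - if i ∈ I then 1 else 0)
        (fun β i => β i + if i ∈ I then 1 else 0) ?_ ?_ ?_ ?_ ?_
      · intro α hα
        rw [Finset.mem_filter, Finset.mem_piAntidiag] at hα
        rw [Finset.mem_piAntidiag]
        refine ⟨?_, fun i _ => Finset.mem_univ i⟩
        have : ∑ i, (α i - if i ∈ I then 1 else 0)
            = (∑ i, α i) - ∑ i, (if i ∈ I then 1 else 0) := by
          rw [eq_tsub_iff_add_eq_of_le, ← Finset.sum_add_distrib]
          · apply Finset.sum_congr rfl
            intro i _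
            by_cases hi : i ∈ I
            · have := hα.2 i hi; simp [hi]; omega
            · simp [hi]
          · apply Finset.sum_le_sum
            intro i _
            by_cases hi : i ∈ I <;> simp [hi] <;> exact hα.2 i hi
        rw [this, hα.1.1, Finset.sum_ite_mem, Finset.univ_inter, Finset.sum_const, hI,
          smul_eq_mul, mul_one]
      · intro β hβ
        rw [Finset.mem_piAntidiag] at hβ
        rw [Finset.mem_filter, Finset.mem_piAntidiag]
        refine ⟨⟨?_, fun i _ => Finset.mem_univ i⟩, fun i hi => by simp [hi]⟩
        rw [Finset.sum_add_distrib, hβ.1, Finset.sum_ite_mem, Finset.univ_inter,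
          Finset.sum_const, hI, smul_eq_mul, mul_one]
        omega
      · intro α hα
        rw [Finset.mem_filter] at hα
        funext i
        by_cases hi : i ∈ I
        · have := hα.2 i hi; simp [hi]; omega
        · simp [hi]
      · intro β _
        funext i
        by_cases hi : i ∈ I <;> simp [hi]
      · intro α hα
        rw [Finset.mem_filter, Finset.mem_piAntidiag] at hα
        set β : Fin n → ℕ := fun i => α i - if i ∈ I then 1 else 0 with hβdef
        have hαβ : α = fun i => β i + if i ∈ I then 1 else 0 := by
          funext i
          by_cases hi : i ∈ I
          · have := hα.2 i hi
            simp only [hβdef, hi, if_true]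
            omega
          · simp [hβdef, hi]
        have hβsum : ∑ i, β i = r - d := by
          have h1 : ∑ i, α i = (∑ i, β i) + d := by
            conv_lhs => rw [hαβ]
            rw [Finset.sum_add_distrib, Finset.sum_ite_mem, Finset.univ_inter,
              Finset.sum_const, hI, smul_eq_mul, mul_one]
          have h2 : ∑ i, α i = r := hα.1.1
          omega
        have hsub : ∀ (f : Fin n → ℝ), (∏ i, (if i ∈ I then f i else 1)) = ∏ i ∈ I, f i := by
          intro f
          rw [Finset.prod_ite_mem, Finset.univ_inter]
        conv_lhs => rw [hαβ]
        beta_reduce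
        -- the term computation, with α = β + 1_I
        have e1 : (∏ i ∈ I, ((β i + if i ∈ I then 1 else 0 : ℕ) : ℝ) / r)
            = (∏ i ∈ I, ((β i : ℝ) + 1)) / (r : ℝ) ^ d := by
          rw [Finset.prod_div_distrib, Finset.prod_const, hI]
          congr 1
          apply Finset.prod_congr rfl
          intro i hi
          simp [hi]
        have e2 : (∏ i, (((β i + if i ∈ I then 1 else 0 : ℕ)).factorial : ℝ))
            = (∏ i, ((β i).factorial : ℝ)) * ∏ i ∈ I, ((β i : ℝ) + 1) := by
          rw [← hsub fun i => (β i : ℝ) + 1, ← Finset.prod_mul_distrib]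
          apply Finset.prod_congr rfl
          intro i _
          by_cases hi : i ∈ I
          · simp only [hi, if_true, Nat.factorial_succ]
            push_cast
            ring
          · simp [hi]
        have e3 : (∏ i, x i ^ (β i + if i ∈ I then 1 else 0))
            = (∏ i, x i ^ β i) * ∏ i ∈ I, x i := by
          rw [← hsub fun i => x i, ← Finset.prod_mul_distrib]
          apply Finset.prod_congr rfl
          intro i _
          by_cases hi : i ∈ I <;> simp [hi, pow_succ]
        have hprodpos : (0:ℝ) < ∏ i ∈ I, ((β i : ℝ) + 1) := by positivity
        have hfacpos : (0:ℝ) < ∏ i, ((β i).factorial : ℝ) := by positivity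
        have hfact : (r.factorial : ℝ) = (r.descFactorial d : ℝ) * ((r - d).factorial : ℝ) := by
          rw [← Nat.cast_mul, mul_comm, Nat.factorial_mul_descFactorial hdr]
        have hspec := Nat.multinomial_spec (s := Finset.univ) (f := β)
        rw [hβsum] at hspec
        have hmult : (Nat.multinomial Finset.univ β : ℝ)
            = ((r - d).factorial : ℝ) / ∏ i, ((β i).factorial : ℝ) := by
          rw [eq_div_iff hfacpos.ne', mul_comm, ← Nat.cast_prod, ← Nat.cast_mul, hspec]
        rw [e1, e2, e3, hfact, hmult]
        field_simp
    rw [key, ← Finset.mul_sum, ← Finset.sum_pow_eq_sum_piAntidiag, hx.2, one_pow, mul_one]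
end

section
/- For any square-free (multilinear) homogeneous polynomial f of degree d in n variables and any integer r ≥ 1, one has f_{Δ(n,r)} − f̲ ≤ (1 − r^{d̲}/r^d)·(f̄ − f̲). -/
open Finset


lemma sum_weight_ind {n r : ℕ} (x : Fin n → ℝ) (I : Finset (Fin n)) (g : {i // i ∈ I} → Fin r) :
    ∑ ω : Fin r → Fin n, (∏ t, x (ω t)) *
        ∏ i : {i // i ∈ I}, (if ω (g i) = (i : Fin n) then (1:ℝ) else 0)
    = ∏ t : Fin r, ∑ j : Fin n,
        x j * ∏ i ∈ univ.filter (fun i : {i // i ∈ I} => g i = t),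
          (if j = (i : Fin n) then (1:ℝ) else 0) := by
  rw [Fintype.prod_sum (fun t j => x j *
    ∏ i ∈ univ.filter (fun i : {i // i ∈ I} => g i = t), (if j = (i : Fin n) then (1:ℝ) else 0))]
  refine Fintype.sum_congr _ _ fun ω => ?_
  rw [prod_mul_distrib]
  congr 1
  rw [← Finset.prod_fiberwise univ g
    (fun i : {i // i ∈ I} => (if ω (g i) = (i : Fin n) then (1:ℝ) else 0))]
  refine prod_congr rfl fun t _ => prod_congr rfl fun i hi => ?_
  rw [(mem_filter.1 hi).2]

lemma prod_fiber_inj {n r : ℕ} (x : Fin n → ℝ) (hs : ∑ i, x i = 1)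
    (I : Finset (Fin n)) (g : {i // i ∈ I} → Fin r) (hg : Function.Injective g) :
    ∏ t : Fin r, ∑ j : Fin n,
        x j * ∏ i ∈ univ.filter (fun i : {i // i ∈ I} => g i = t),
          (if j = (i : Fin n) then (1:ℝ) else 0)
      = ∏ i ∈ I, x i := by
  have h1 : ∀ t : Fin r, t ∉ univ.image g → (∑ j : Fin n,
      x j * ∏ i ∈ univ.filter (fun i : {i // i ∈ I} => g i = t),
        (if j = (i : Fin n) then (1:ℝ) else 0)) = 1 := by
    intro t ht
    have : univ.filter (fun i : {i // i ∈ I} => g i = t) = ∅ := by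
      refine filter_eq_empty_iff.2 fun i _ hit => ht ?_
      exact mem_image.2 ⟨i, mem_univ i, hit⟩
    rw [this]
    simp [hs]
  rw [← prod_subset (subset_univ (univ.image g)) (fun t _ ht => h1 t ht)]
  rw [prod_image (fun i _ j _ h => hg h)]
  have h2 : ∀ i : {i // i ∈ I}, (∑ j : Fin n,
      x j * ∏ i' ∈ univ.filter (fun i' : {i' // i' ∈ I} => g i' = g i),
        (if j = (i' : Fin n) then (1:ℝ) else 0)) = x i := by
    intro i
    have hfib : univ.filter (fun i' : {i' // i' ∈ I} => g i' = g i) = {i} := by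
      ext i'
      simp only [mem_filter, mem_univ, true_and, mem_singleton]
      exact ⟨fun h => hg h, fun h => by rw [h]⟩
    rw [hfib]
    simp only [prod_singleton, mul_ite, mul_one, mul_zero]
    simp
  rw [prod_congr rfl fun i _ => h2 i]
  exact Finset.prod_coe_sort I x

lemma prod_fiber_noninj {n r : ℕ} (x : Fin n → ℝ)
    (I : Finset (Fin n)) (g : {i // i ∈ I} → Fin r) (hg : ¬ Function.Injective g) :
    ∏ t : Fin r, ∑ j : Fin n,
        x j * ∏ i ∈ univ.filter (fun i : {i // i ∈ I} => g i = t),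
          (if j = (i : Fin n) then (1:ℝ) else 0)
      = 0 := by
  simp only [Function.Injective, not_forall] at hg
  obtain ⟨a, b, hab, hne⟩ := hg
  refine prod_eq_zero (mem_univ (g a)) ?_
  refine Finset.sum_eq_zero fun j _ => ?_
  have ha : a ∈ univ.filter (fun i : {i // i ∈ I} => g i = g a) := by simp
  have hb : b ∈ univ.filter (fun i : {i // i ∈ I} => g i = g a) := by simp [hab]
  rcases eq_or_ne j (a : Fin n) with h | h
  · rw [prod_eq_zero hb]
    · ring
    · have : j ≠ (b : Fin n) := by
        rw [h]; exact fun hc => hne (Subtype.ext hc)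
      simp [this]
  · rw [prod_eq_zero ha]
    · ring
    · simp [h]

lemma card_inj_filter (n r d : ℕ) (I : Finset (Fin n)) (hI : I.card = d)
    [DecidablePred (Function.Injective : ({i // i ∈ I} → Fin r) → Prop)] :
    (univ.filter (Function.Injective : ({i // i ∈ I} → Fin r) → Prop)).card
      = r.descFactorial d := by
  classical
  rw [← Fintype.card_subtype]
  rw [Fintype.card_congr (Equiv.subtypeInjectiveEquivEmbedding _ _)]
  rw [Fintype.card_embedding_eq]
  simp [hI]

lemma moment_eq (n r d : ℕ) (x : Fin n → ℝ) (hs : ∑ i, x i = 1)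
    (I : Finset (Fin n)) (hI : I.card = d) :
    ∑ ω : Fin r → Fin n, (∏ t, x (ω t)) *
        ∏ i ∈ I, ((univ.filter (fun t : Fin r => ω t = i)).card : ℝ)
      = (r.descFactorial d : ℝ) * ∏ i ∈ I, x i := by
  classical
  have step1 : ∀ ω : Fin r → Fin n,
      ∏ i ∈ I, ((univ.filter (fun t : Fin r => ω t = i)).card : ℝ)
        = ∑ g : {i // i ∈ I} → Fin r,
            ∏ i : {i // i ∈ I}, (if ω (g i) = (i : Fin n) then (1:ℝ) else 0) := by
    intro ω
    rw [← Fintype.prod_sum (fun (i : {i // i ∈ I}) (t : Fin r) =>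
      (if ω t = (i : Fin n) then (1:ℝ) else 0))]
    rw [← Finset.prod_coe_sort I (fun i => ((univ.filter (fun t : Fin r => ω t = i)).card : ℝ))]
    refine Fintype.prod_congr _ _ fun i => ?_
    rw [Finset.card_filter]
    push_cast
    rfl
  calc ∑ ω : Fin r → Fin n, (∏ t, x (ω t)) *
        ∏ i ∈ I, ((univ.filter (fun t : Fin r => ω t = i)).card : ℝ)
      = ∑ ω : Fin r → Fin n, ∑ g : {i // i ∈ I} → Fin r, (∏ t, x (ω t)) *
          ∏ i : {i // i ∈ I}, (if ω (g i) = (i : Fin n) then (1:ℝ) else 0) := by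
        refine Fintype.sum_congr _ _ fun ω => ?_
        rw [step1 ω, mul_sum]
    _ = ∑ g : {i // i ∈ I} → Fin r, ∑ ω : Fin r → Fin n, (∏ t, x (ω t)) *
          ∏ i : {i // i ∈ I}, (if ω (g i) = (i : Fin n) then (1:ℝ) else 0) := by
        rw [Finset.sum_comm]
    _ = ∑ g : {i // i ∈ I} → Fin r,
          (if Function.Injective g then ∏ i ∈ I, x i else 0) := by
        refine Fintype.sum_congr _ _ fun g => ?_
        rw [sum_weight_ind x I g]
        by_cases hg : Function.Injective g
        · rw [if_pos hg]; exact prod_fiber_inj x hs I g hg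
        · rw [if_neg hg]; exact prod_fiber_noninj x I g hg
    _ = (r.descFactorial d : ℝ) * ∏ i ∈ I, x i := by
        rw [Finset.sum_ite, Finset.sum_const, Finset.sum_const_zero, add_zero,
          nsmul_eq_mul, card_inj_filter n r d I hI]

lemma freq_mem_grid {n r : ℕ} (hr : 1 ≤ r) (ω : Fin r → Fin n) :
    (fun i => ((univ.filter (fun t : Fin r => ω t = i)).card : ℝ) / r) ∈ grid n r := by
  have hr0 : (r : ℝ) ≠ 0 := Nat.cast_ne_zero.2 (by omega)
  refine ⟨⟨fun i => by positivity, ?_⟩, fun i => ⟨(univ.filter (fun t : Fin r => ω t = i)).card, by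
    field_simp⟩⟩
  rw [← Finset.sum_div]
  rw [div_eq_one_iff_eq hr0]
  rw [← Nat.cast_sum]
  have : ∑ i : Fin n, (univ.filter (fun t : Fin r => ω t = i)).card = (univ : Finset (Fin r)).card :=
    (Finset.card_eq_sum_card_fiberwise (fun t _ => mem_univ (ω t))).symm
  rw [this, card_univ, Fintype.card_fin]

lemma exists_grid_le (n r d : ℕ) (hr : 1 ≤ r) (c : Finset (Fin n) → ℝ) (x : Fin n → ℝ)
    (hx : x ∈ stdSimplex ℝ (Fin n)) :
    ∃ z ∈ grid n r,
      (∑ I ∈ univ.powersetCard d, c I * ∏ i ∈ I, z i)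
        ≤ ((r.descFactorial d : ℝ) / (r:ℝ) ^ d) *
            ∑ I ∈ univ.powersetCard d, c I * ∏ i ∈ I, x i := by
  set f : (Fin n → ℝ) → ℝ := fun y => ∑ I ∈ univ.powersetCard d, c I * ∏ i ∈ I, y i with hf
  set F : (Fin r → Fin n) → (Fin n → ℝ) :=
    fun ω i => ((univ.filter (fun t : Fin r => ω t = i)).card : ℝ) / r with hF
  set w : (Fin r → Fin n) → ℝ := fun ω => ∏ t, x (ω t) with hw
  have hwnn : ∀ ω, 0 ≤ w ω := fun ω => prod_nonneg fun t _ => hx.1 _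
  have hwsum : ∑ ω : Fin r → Fin n, w ω = 1 := by
    simpa [hx.2] using (Fintype.sum_pow x r).symm
  have hid : ∑ ω : Fin r → Fin n, w ω * f (F ω)
      = ((r.descFactorial d : ℝ) / (r:ℝ) ^ d) * f x := by
    have hFp : ∀ (ω : Fin r → Fin n) (I : Finset (Fin n)), I ∈ univ.powersetCard d →
        ∏ i ∈ I, F ω i
          = (∏ i ∈ I, ((univ.filter (fun t : Fin r => ω t = i)).card : ℝ)) / (r:ℝ)^d := by
      intro ω I hI
      rw [hF]
      rw [Finset.prod_div_distrib, Finset.prod_const, (Finset.mem_powersetCard.1 hI).2]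
    calc ∑ ω : Fin r → Fin n, w ω * f (F ω)
        = ∑ ω : Fin r → Fin n, ∑ I ∈ univ.powersetCard d, (c I / (r:ℝ)^d) *
            (w ω * ∏ i ∈ I, ((univ.filter (fun t : Fin r => ω t = i)).card : ℝ)) := by
          refine Fintype.sum_congr _ _ fun ω => ?_
          rw [hf, mul_sum]
          refine sum_congr rfl fun I hI => ?_
          rw [hFp ω I hI]; ring
      _ = ∑ I ∈ univ.powersetCard d, (c I / (r:ℝ)^d) *
            ∑ ω : Fin r → Fin n, w ω *
              ∏ i ∈ I, ((univ.filter (fun t : Fin r => ω t = i)).card : ℝ) := by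
          rw [Finset.sum_comm]
          exact sum_congr rfl fun I _ => by rw [mul_sum]
      _ = ∑ I ∈ univ.powersetCard d, (c I / (r:ℝ)^d) *
            ((r.descFactorial d : ℝ) * ∏ i ∈ I, x i) := by
          refine sum_congr rfl fun I hI => ?_
          rw [hw, moment_eq n r d x hx.2 I (Finset.mem_powersetCard.1 hI).2]
      _ = ((r.descFactorial d : ℝ) / (r:ℝ)^d) * f x := by
          rw [hf, mul_sum]
          exact sum_congr rfl fun I _ => by ring
  by_contra hcon
  push_neg at hcon
  have hlt : ∀ ω : Fin r → Fin n, ((r.descFactorial d:ℝ)/(r:ℝ)^d) * f x < f (F ω) :=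
    fun ω => hcon (F ω) (freq_mem_grid hr ω)
  obtain ⟨ω0, hω0⟩ : ∃ ω : Fin r → Fin n, 0 < w ω := by
    by_contra h; push_neg at h
    have h1 : (1:ℝ) ≤ 0 := hwsum ▸ sum_nonpos fun ω _ => h ω
    linarith
  have hstrict : ∑ ω : Fin r → Fin n, w ω * (((r.descFactorial d:ℝ)/(r:ℝ)^d) * f x)
      < ∑ ω : Fin r → Fin n, w ω * f (F ω) :=
    Finset.sum_lt_sum (fun ω _ => mul_le_mul_of_nonneg_left (le_of_lt (hlt ω)) (hwnn ω))
      ⟨ω0, mem_univ ω0, mul_lt_mul_of_pos_left (hlt ω0) hω0⟩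
  rw [hid] at hstrict
  rw [← Finset.sum_mul, hwsum, one_mul] at hstrict
  exact lt_irrefl _ hstrict

theorem stmt12 (n r d : ℕ) (hr : 1 ≤ r) (c : Finset (Fin n) → ℝ)
    (fmin fmax fgrid : ℝ)
    (hmin : IsLeast
      ((fun y : Fin n → ℝ => ∑ I ∈ Finset.univ.powersetCard d, c I * ∏ i ∈ I, y i) ''
        stdSimplex ℝ (Fin n)) fmin)
    (hmax : IsGreatest
      ((fun y : Fin n → ℝ => ∑ I ∈ Finset.univ.powersetCard d, c I * ∏ i ∈ I, y i) ''
        stdSimplex ℝ (Fin n)) fmax)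
    (hgrid : IsLeast
      ((fun y : Fin n → ℝ => ∑ I ∈ Finset.univ.powersetCard d, c I * ∏ i ∈ I, y i) ''
        grid n r) fgrid) :
    fgrid - fmin ≤ (1 - (r.descFactorial d : ℝ) / (r : ℝ) ^ d) * (fmax - fmin) := by
  have hr0 : (0:ℝ) < (r:ℝ) := by exact_mod_cast hr
  set s : ℝ := (r.descFactorial d : ℝ) / (r : ℝ) ^ d with hsdef
  obtain ⟨⟨x, hx, hfx⟩, _⟩ := hmin
  obtain ⟨z, hz, hzle⟩ := exists_grid_le n r d hr c x hx
  have h1 : fgrid ≤ s * fmin := by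
    refine le_trans (hgrid.2 ⟨z, hz, rfl⟩) ?_
    rw [← hfx]; exact hzle
  have hs1 : s ≤ 1 := by
    rw [hsdef, div_le_one (by positivity)]
    exact_mod_cast Nat.descFactorial_le_pow r d
  have hminmax : fmin ≤ fmax := hmax.2 ⟨x, hx, hfx⟩
  match d with
  | 0 =>
    have : s = 1 := by
      rw [hsdef]; simp
    rw [this] at h1 ⊢
    linarith
  | 1 =>
    have : s = 1 := by
      rw [hsdef]
      simp [Nat.descFactorial_one]
      omega
    rw [this] at h1 ⊢
    linarith
  | (e+2) =>
    -- fmax ≥ 0 : evaluate at a vertex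
    have hn : 0 < n := by
      rcases Nat.eq_zero_or_pos n with h | h
      · exfalso
        have := hx.2
        subst h
        simp at this
      · exact h
    have i0 : Fin n := ⟨0, hn⟩
    have hvert : (fun j : Fin n => if j = i0 then (1:ℝ) else 0) ∈ stdSimplex ℝ (Fin n) := by
      constructor
      · intro j; dsimp only; split <;> norm_num
      · simp
    have hval : (∑ I ∈ Finset.univ.powersetCard (e+2), c I *
        ∏ i ∈ I, (if i = i0 then (1:ℝ) else 0)) = 0 := by
      refine Finset.sum_eq_zero fun I hI => ?_
      have hcard : I.card = e + 2 := (Finset.mem_powersetCard.1 hI).2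
      obtain ⟨a, ha, b, hb, hab⟩ := Finset.one_lt_card.1 (by omega : 1 < I.card)
      rcases eq_or_ne a i0 with h | h
      · have hbne : b ≠ i0 := fun hc => hab (by rw [h, hc])
        rw [Finset.prod_eq_zero hb (by simp [hbne])]
        ring
      · rw [Finset.prod_eq_zero ha (by simp [h])]
        ring
    have hfmax0 : 0 ≤ fmax := by
      have := hmax.2 ⟨_, hvert, rfl⟩
      dsimp only at this
      rw [hval] at this
      exact this
    nlinarith [mul_nonneg (sub_nonneg.2 hs1) hfmax0]
end

section
/- Let k < d be positive integers and α ∈ ℕ^n with |α| = k. Then S(d,k) = (α!/k!)·Σ_{β∈I(n,d)} (d!/β!)·Π_{i=1}^n S(β_i, α_i), where S denotes Stirling numbers of the second kind. -/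
/-- Stirling numbers of the second kind. -/
def stirling : ℕ → ℕ → ℕ
  | 0, 0 => 1
  | 0, _ + 1 => 0
  | _ + 1, 0 => 0
  | m + 1, k + 1 => stirling m k + (k + 1) * stirling m (k + 1)

open Finset

lemma stirling_succ_zero (d : ℕ) : stirling (d+1) 0 = 0 := rfl

lemma stirling_zero_succ (k : ℕ) : stirling 0 (k+1) = 0 := rfl

lemma stirling_succ_succ (d k : ℕ) :
    stirling (d+1) (k+1) = stirling d k + (k+1) * stirling d (k+1) := rfl

lemma conv_lemma (d p q : ℕ) :
    (p+q).choose p * stirling d (p+q)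
      = ∑ a ∈ range (d+1), d.choose a * (stirling a p * stirling (d-a) q) := by
  induction d generalizing p q with
  | zero =>
    rcases p with _ | p <;> rcases q with _ | q <;> simp [stirling]
  | succ d ih =>
    rcases p with _ | p
    · -- p = 0
      simp only [Nat.zero_add, Nat.choose_zero_right, one_mul]
      rw [Finset.sum_eq_single 0]
      · simp [stirling]
      · rintro (_ | b) hb hb0
        · omega
        · simp [stirling_succ_zero]
      · intro h; simp at h
    rcases q with _ | q
    · -- q = 0
      simp only [Nat.add_zero]
      rw [Finset.sum_eq_single (d+1)]
      · simp [stirling]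
      · intro b hb hb0
        have : 0 < d + 1 - b := by simp at hb; omega
        obtain ⟨c, hc⟩ := Nat.exists_eq_add_of_lt this
        simp only [show d + 1 - b = (0+c)+1 by omega, stirling_succ_zero]
        ring
      · intro h; simp at h
    -- main case
    have key : ∑ a ∈ range (d+2),
          (d+1).choose a * (stirling a (p+1) * stirling (d+1-a) (q+1))
        = (∑ i ∈ range (d+1), d.choose i * (stirling (i+1) (p+1) * stirling (d-i) (q+1)))
          + ∑ a ∈ range (d+1), d.choose a * (stirling a (p+1) * stirling (d-a+1) (q+1)) := by
      rw [Finset.sum_range_succ']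
      have hf0 : (d+1).choose 0 * (stirling 0 (p+1) * stirling (d+1-0) (q+1)) = 0 := by
        simp [stirling_zero_succ]
      rw [hf0, add_zero]
      have hsplit : ∀ i ∈ range (d+1),
          (d+1).choose (i+1) * (stirling (i+1) (p+1) * stirling (d+1-(i+1)) (q+1))
            = d.choose i * (stirling (i+1) (p+1) * stirling (d-i) (q+1))
              + d.choose (i+1) * (stirling (i+1) (p+1) * stirling (d-i) (q+1)) := by
        intro i hi
        rw [Nat.choose_succ_succ, Nat.succ_sub_succ, add_mul]
      rw [Finset.sum_congr rfl hsplit, Finset.sum_add_distrib]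
      congr 1
      -- shift the second sum
      have h2 := Finset.sum_range_succ'
        (fun a => d.choose a * (stirling a (p+1) * stirling (d+1-a) (q+1))) (d+1)
      have h3 := Finset.sum_range_succ
        (fun a => d.choose a * (stirling a (p+1) * stirling (d+1-a) (q+1))) (d+1)
      simp only [Nat.succ_sub_succ, Nat.choose_succ_self, zero_mul, add_zero,
        stirling_zero_succ, mul_zero, zero_mul, add_zero] at h2 h3
      rw [← h2, h3]
      refine Finset.sum_congr rfl fun a ha => ?_
      simp only [mem_range] at ha
      rw [show d + 1 - a = d - a + 1 by omega]
    rw [key]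
    have e1 : ∀ i ∈ range (d+1),
        d.choose i * (stirling (i+1) (p+1) * stirling (d-i) (q+1))
          = d.choose i * (stirling i p * stirling (d-i) (q+1))
            + (p+1) * (d.choose i * (stirling i (p+1) * stirling (d-i) (q+1))) := by
      intro i _; rw [stirling_succ_succ]; ring
    have e2 : ∀ a ∈ range (d+1),
        d.choose a * (stirling a (p+1) * stirling (d-a+1) (q+1))
          = d.choose a * (stirling a (p+1) * stirling (d-a) q)
            + (q+1) * (d.choose a * (stirling a (p+1) * stirling (d-a) (q+1))) := by
      intro a _; rw [stirling_succ_succ]; ring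
    rw [Finset.sum_congr rfl e1, Finset.sum_congr rfl e2, Finset.sum_add_distrib,
      Finset.sum_add_distrib, ← Finset.mul_sum, ← Finset.mul_sum,
      ← ih p (q+1), ← ih (p+1) q, ← ih (p+1) (q+1)]
    rw [show p + (q+1) = p+q+1 by omega, show p+1+q = p+q+1 by omega,
      show p+1+(q+1) = (p+q+1)+1 by omega]
    rw [stirling_succ_succ d (p+q+1), Nat.choose_succ_succ (p+q+1) p]
    ring


lemma sum_adt_succ {M : Type*} [AddCommMonoid M] (n d : ℕ) (f : (Fin (n+1) → ℕ) → M) :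
    ∑ β ∈ Finset.Nat.antidiagonalTuple (n+1) d, f β
      = ∑ ab ∈ Finset.HasAntidiagonal.antidiagonal d,
          ∑ γ ∈ Finset.Nat.antidiagonalTuple n ab.2, f (Fin.cons ab.1 γ) := by
  rw [Finset.sum_sigma']
  refine Finset.sum_nbij' (fun β => ⟨(β 0, ∑ i : Fin n, β i.succ), Fin.tail β⟩)
    (fun x => Fin.cons x.1.1 x.2) ?_ ?_ ?_ ?_ ?_
  · intro β hβ
    simp only [Finset.Nat.mem_antidiagonalTuple] at hβ
    simp only [Finset.mem_sigma, Finset.HasAntidiagonal.mem_antidiagonal, Finset.Nat.mem_antidiagonalTuple]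
    constructor
    · rw [← hβ, Fin.sum_univ_succ]
    · simp [Fin.tail]
  · intro x hx
    simp only [Finset.mem_sigma, Finset.HasAntidiagonal.mem_antidiagonal,
      Finset.Nat.mem_antidiagonalTuple] at hx
    simp only [Finset.Nat.mem_antidiagonalTuple, Fin.sum_cons, hx.2, hx.1]
  · intro β hβ
    simp [Fin.cons_self_tail]
  · intro x hx
    obtain ⟨⟨a,b⟩, γ⟩ := x
    simp only [Finset.mem_sigma, Finset.HasAntidiagonal.mem_antidiagonal,
      Finset.Nat.mem_antidiagonalTuple] at hx
    simp [Fin.tail_cons, hx.2]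
  · intro β hβ
    simp [Fin.cons_self_tail]

lemma fact_ne (m : ℕ) : ((m.factorial : ℝ)) ≠ 0 := by
  exact_mod_cast m.factorial_ne_zero

lemma prod_fact_ne {n : ℕ} (γ : Fin n → ℕ) : (∏ i, ((γ i).factorial : ℝ)) ≠ 0 :=
  Finset.prod_ne_zero_iff.mpr fun i _ => fact_ne _

lemma main_lemma (n : ℕ) (α : Fin n → ℕ) (d : ℕ) :
    ∑ β ∈ Finset.Nat.antidiagonalTuple n d,
        ((d.factorial : ℝ) / ∏ i, ((β i).factorial : ℝ)) * ∏ i, (stirling (β i) (α i) : ℝ)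
      = (((∑ i, α i).factorial : ℝ) / ∏ i, ((α i).factorial : ℝ)) *
          stirling d (∑ i, α i) := by
  induction n generalizing d with
  | zero =>
    cases d with
    | zero => simp [stirling]
    | succ d => simp [stirling_succ_zero]
  | succ n ih =>
    rw [sum_adt_succ]
    have step1 : ∀ ab ∈ Finset.HasAntidiagonal.antidiagonal d,
        (∑ γ ∈ Finset.Nat.antidiagonalTuple n ab.2,
          ((d.factorial : ℝ) / ∏ i : Fin (n+1), (((Fin.cons ab.1 γ : Fin (n+1) → ℕ) i).factorial : ℝ)) *
            ∏ i : Fin (n+1), (stirling ((Fin.cons ab.1 γ : Fin (n+1) → ℕ) i) (α i) : ℝ))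
        = (((∑ i : Fin n, α i.succ).factorial : ℝ) / ∏ i : Fin n, ((α i.succ).factorial : ℝ)) *
            (((d.factorial : ℝ) / ((ab.1.factorial : ℝ) * (ab.2.factorial : ℝ))) *
              ((stirling ab.1 (α 0) : ℝ) * (stirling ab.2 (∑ i : Fin n, α i.succ) : ℝ))) := by
      rintro ⟨a, b⟩ hab
      have hih := ih (fun i => α i.succ) b
      simp only at hih ⊢
      rw [show ((((∑ i : Fin n, α i.succ).factorial : ℝ) / ∏ i : Fin n, ((α i.succ).factorial : ℝ)) *
            (((d.factorial : ℝ) / ((a.factorial : ℝ) * (b.factorial : ℝ))) *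
              ((stirling a (α 0) : ℝ) * (stirling b (∑ i : Fin n, α i.succ) : ℝ))))
          = (((d.factorial : ℝ) / ((a.factorial : ℝ) * (b.factorial : ℝ))) *
              (stirling a (α 0) : ℝ)) *
            ((((∑ i : Fin n, α i.succ).factorial : ℝ) / ∏ i : Fin n, ((α i.succ).factorial : ℝ)) *
              (stirling b (∑ i : Fin n, α i.succ) : ℝ)) by ring, ← hih, Finset.mul_sum]
      refine Finset.sum_congr rfl fun γ hγ => ?_
      simp only [Fin.prod_univ_succ, Fin.cons_zero, Fin.cons_succ]
      have h1 := fact_ne a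
      have h2 := fact_ne b
      have h3 := prod_fact_ne γ
      field_simp
    rw [Finset.sum_congr rfl step1, ← Finset.mul_sum]
    -- now the antidiagonal sum via conv_lemma
    have hcast : (((α 0 + ∑ i : Fin n, α i.succ).choose (α 0) : ℝ)) *
          (stirling d (α 0 + ∑ i : Fin n, α i.succ) : ℝ)
        = ∑ a ∈ range (d+1), (d.choose a : ℝ) *
            ((stirling a (α 0) : ℝ) * (stirling (d-a) (∑ i : Fin n, α i.succ) : ℝ)) := by
      exact_mod_cast congrArg (Nat.cast (R := ℝ)) (conv_lemma d (α 0) (∑ i : Fin n, α i.succ))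
    have hanti : ∑ ab ∈ Finset.HasAntidiagonal.antidiagonal d,
          (((d.factorial : ℝ) / ((ab.1.factorial : ℝ) * (ab.2.factorial : ℝ))) *
            ((stirling ab.1 (α 0) : ℝ) * (stirling ab.2 (∑ i : Fin n, α i.succ) : ℝ)))
        = (((α 0 + ∑ i : Fin n, α i.succ).choose (α 0) : ℝ)) *
            (stirling d (α 0 + ∑ i : Fin n, α i.succ) : ℝ) := by
      rw [hcast, Finset.Nat.sum_antidiagonal_eq_sum_range_succ_mk]
      refine Finset.sum_congr rfl fun a ha => ?_
      simp only [mem_range] at ha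
      rw [Nat.cast_choose ℝ (by omega : a ≤ d)]
    rw [hanti]
    -- final algebra
    rw [Fin.sum_univ_succ, Fin.prod_univ_succ,
      Nat.cast_choose ℝ (le_add_right le_rfl : α 0 ≤ α 0 + ∑ i : Fin n, α i.succ),
      Nat.add_sub_cancel_left]
    have h1 := fact_ne (α 0)
    have h2 := fact_ne (∑ i : Fin n, α i.succ)
    have h3 := prod_fact_ne (fun i => α i.succ)
    field_simp

theorem stmt15 (n d k : ℕ) (hk : 0 < k) (hkd : k < d) (α : Fin n → ℕ) (hα : ∑ i, α i = k) :
    (stirling d k : ℝ)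
      = ((∏ i, ((α i).factorial : ℝ)) / (k.factorial : ℝ)) *
        ∑ β ∈ Finset.Nat.antidiagonalTuple n d,
          ((d.factorial : ℝ) / ∏ i, ((β i).factorial : ℝ)) *
            ∏ i, (stirling (β i) (α i) : ℝ) := by
  have hM := main_lemma n α d
  rw [hα] at hM
  rw [hM]
  have h1 := fact_ne k
  have h2 := prod_fact_ne α
  field_simp
end

section
/- For any β ∈ ℕ^n, integer r ≥ 0, and x ∈ Δ_n, the β-th moment of the multinomial distribution satisfies Σ_{α∈I(n,r)} α^β·(r!/α!)·x^α = Σ_{α∈ℕ^n, α≤β} r^{|α|̲}·x^α·Π_{i=1}^n S(β_i, α_i). -/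
lemma stirling_eq_zero_of_lt : ∀ {b k : ℕ}, b < k → stirling b k = 0
  | 0, 0, h => absurd h (lt_irrefl 0)
  | 0, _ + 1, _ => rfl
  | _ + 1, 0, h => absurd h (Nat.not_lt_zero _)
  | b + 1, k + 1, h => by
    have h1 : b < k := Nat.lt_of_succ_lt_succ h
    rw [stirling, stirling_eq_zero_of_lt h1, stirling_eq_zero_of_lt (h1.trans (Nat.lt_succ_self k))]
    simp

lemma mul_descFactorial (m k : ℕ) :
    m * m.descFactorial k = m.descFactorial (k + 1) + k * m.descFactorial k := by
  rcases le_or_gt k m with h | h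
  · rw [Nat.descFactorial_succ, ← Nat.add_mul, Nat.sub_add_cancel h]
  · rw [Nat.descFactorial_eq_zero_iff_lt.2 h,
      Nat.descFactorial_eq_zero_iff_lt.2 (h.trans (Nat.lt_succ_self k))]
    simp

lemma pow_eq_sum_stirling (m b : ℕ) :
    m ^ b = ∑ k ∈ Finset.range (b + 1), stirling b k * m.descFactorial k := by
  induction b with
  | zero => simp [stirling]
  | succ b ih =>
    rw [pow_succ, ih, Finset.sum_mul]
    have lhs : ∀ k, stirling b k * m.descFactorial k * m
        = stirling b k * m.descFactorial (k + 1) + k * (stirling b k * m.descFactorial k) := by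
      intro k
      rw [mul_comm _ m, mul_left_comm, mul_descFactorial, Nat.mul_add]
      ring
    rw [Finset.sum_congr rfl fun k _ => lhs k, Finset.sum_add_distrib]
    rw [Finset.sum_range_succ' (fun k => stirling (b + 1) k * m.descFactorial k)]
    have h0 : stirling (b + 1) 0 = 0 := rfl
    rw [h0, Nat.zero_mul, Nat.add_zero]
    have hr : ∀ k, stirling (b + 1) (k + 1) * m.descFactorial (k + 1)
        = stirling b k * m.descFactorial (k + 1)
          + (k + 1) * (stirling b (k + 1) * m.descFactorial (k + 1)) := by
      intro k; rw [stirling]; ring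
    rw [Finset.sum_congr rfl fun k _ => hr k, Finset.sum_add_distrib]
    have key : ∑ k ∈ Finset.range (b + 2), k * (stirling b k * m.descFactorial k)
        = ∑ k ∈ Finset.range (b + 1), (k + 1) * (stirling b (k + 1) * m.descFactorial (k + 1)) := by
      rw [Finset.sum_range_succ' (fun k => k * (stirling b k * m.descFactorial k))]
      simp
    rw [Finset.sum_range_succ (fun k => k * (stirling b k * m.descFactorial k)) (b + 1),
      stirling_eq_zero_of_lt (Nat.lt_succ_self b)] at key
    simp only [Nat.mul_zero, Nat.zero_mul, Nat.add_zero, Nat.mul_assoc] at key ⊢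
    omega

lemma multinomial_sum_one (n m : ℕ) (x : Fin n → ℝ) (hx : ∑ i, x i = 1) :
    ∑ γ ∈ Finset.Nat.antidiagonalTuple n m,
      ((m.factorial : ℝ) / ∏ i, ((γ i).factorial : ℝ)) * ∏ i, x i ^ γ i = 1 := by
  have h := Finset.sum_pow_eq_sum_piAntidiag (Finset.univ : Finset (Fin n)) x m
  rw [Finset.piAntidiag_univ_fin_eq_antidiagonalTuple, hx, one_pow] at h
  rw [h]
  refine Finset.sum_congr rfl fun γ hγ => ?_
  have hsum : ∑ i, γ i = m := Finset.Nat.mem_antidiagonalTuple.1 hγ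
  have hspec := Nat.multinomial_spec Finset.univ γ
  rw [hsum] at hspec
  have hQ : (∏ i, ((γ i).factorial : ℝ)) ≠ 0 := by positivity
  congr 1
  rw [div_eq_iff hQ, ← Nat.cast_prod, ← Nat.cast_mul, mul_comm, hspec]

lemma factorial_moment (n r : ℕ) (x : Fin n → ℝ) (hx : ∑ i, x i = 1) (k : Fin n → ℕ) :
    ∑ α ∈ Finset.Nat.antidiagonalTuple n r,
      (∏ i, ((α i).descFactorial (k i) : ℝ)) *
        ((r.factorial : ℝ) / ∏ i, ((α i).factorial : ℝ)) * ∏ i, x i ^ α i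
    = (r.descFactorial (∑ i, k i) : ℝ) * ∏ i, x i ^ k i := by
  rcases le_or_gt (∑ i, k i) r with hle | hlt
  · -- restrict to α with k ≤ α
    classical
    have hfilter : ∑ α ∈ (Finset.Nat.antidiagonalTuple n r).filter (fun α => ∀ i, k i ≤ α i),
        (∏ i, ((α i).descFactorial (k i) : ℝ)) *
          ((r.factorial : ℝ) / ∏ i, ((α i).factorial : ℝ)) * ∏ i, x i ^ α i
        = ∑ α ∈ Finset.Nat.antidiagonalTuple n r,
        (∏ i, ((α i).descFactorial (k i) : ℝ)) *
          ((r.factorial : ℝ) / ∏ i, ((α i).factorial : ℝ)) * ∏ i, x i ^ α i := by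
      refine Finset.sum_filter_of_ne fun α hα hne i => ?_
      by_contra hlt'
      push_neg at hlt'
      apply hne
      have : ((α i).descFactorial (k i) : ℝ) = 0 := by
        rw [Nat.descFactorial_eq_zero_iff_lt.2 hlt', Nat.cast_zero]
      rw [Finset.prod_eq_zero (Finset.mem_univ i) this, zero_mul, zero_mul]
    rw [← hfilter]
    rw [Finset.sum_nbij' (i := fun α => α - k) (j := fun γ => γ + k)
      (t := Finset.Nat.antidiagonalTuple n (r - ∑ i, k i))
      (g := fun γ => (r.descFactorial (∑ i, k i) : ℝ) * (∏ i, x i ^ k i) *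
        ((((r - ∑ i, k i).factorial : ℝ) / ∏ i, ((γ i).factorial : ℝ)) * ∏ i, x i ^ γ i))]
    · rw [← Finset.mul_sum, multinomial_sum_one n (r - ∑ i, k i) x hx, mul_one]
    · intro α hα
      rw [Finset.mem_filter, Finset.Nat.mem_antidiagonalTuple] at hα
      rw [Finset.Nat.mem_antidiagonalTuple]
      have : ∀ i, (α - k) i = α i - k i := fun i => rfl
      simp_rw [this]
      rw [← hα.1]
      exact Finset.sum_tsub_distrib Finset.univ (fun i _ => hα.2 i)
    · intro γ hγ
      rw [Finset.Nat.mem_antidiagonalTuple] at hγ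
      rw [Finset.mem_filter, Finset.Nat.mem_antidiagonalTuple]
      constructor
      · have : ∀ i, (γ + k) i = γ i + k i := fun i => rfl
        simp_rw [this, Finset.sum_add_distrib, hγ, Nat.sub_add_cancel hle]
      · intro i; exact Nat.le_add_left _ _
    · intro α hα
      rw [Finset.mem_filter] at hα
      funext i
      exact Nat.sub_add_cancel (hα.2 i)
    · intro γ hγ
      funext i
      simp
    · intro α hα
      rw [Finset.mem_filter, Finset.Nat.mem_antidiagonalTuple] at hα
      set γ := α - k with hγdef
      have hαγ : ∀ i, α i = γ i + k i := fun i => (Nat.sub_add_cancel (hα.2 i)).symm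
      have hsumγ : ∑ i, γ i = r - ∑ i, k i := by
        have : ∀ i, γ i = α i - k i := fun i => rfl
        simp_rw [this]
        rw [← hα.1]
        exact Finset.sum_tsub_distrib Finset.univ (fun i _ => hα.2 i)
      have h1 : (∏ i, ((α i).descFactorial (k i) : ℝ)) * ∏ i, ((γ i).factorial : ℝ)
          = ∏ i, ((α i).factorial : ℝ) := by
        rw [← Finset.prod_mul_distrib]
        refine Finset.prod_congr rfl fun i _ => ?_
        rw [← Nat.cast_mul, mul_comm]
        congr 1
        rw [hαγ i]
        have := Nat.factorial_mul_descFactorial (n := γ i + k i) (k := k i) (Nat.le_add_left _ _)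
        rwa [Nat.add_sub_cancel] at this
      have h2 : ((r - ∑ i, k i).factorial : ℝ) * (r.descFactorial (∑ i, k i) : ℝ)
          = (r.factorial : ℝ) := by
        rw [← Nat.cast_mul, Nat.factorial_mul_descFactorial hle]
      have hxsplit : (∏ i, x i ^ α i) = (∏ i, x i ^ γ i) * ∏ i, x i ^ k i := by
        rw [← Finset.prod_mul_distrib]
        refine Finset.prod_congr rfl fun i _ => ?_
        rw [hαγ i, pow_add]
      have hQ : (∏ i, ((γ i).factorial : ℝ)) ≠ 0 := by positivity
      have hP : (∏ i, ((α i).factorial : ℝ)) ≠ 0 := by positivity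
      have hD : (∏ i, ((α i).descFactorial (k i) : ℝ)) ≠ 0 := by
        rw [Finset.prod_ne_zero_iff]
        intro i _
        have : (α i).descFactorial (k i) ≠ 0 := by
          rw [Ne, Nat.descFactorial_eq_zero_iff_lt]
          exact Nat.not_lt.2 (hα.2 i)
        exact_mod_cast this
      rw [hxsplit, ← h2, ← h1]
      field_simp
  · rw [Nat.descFactorial_eq_zero_iff_lt.2 hlt, Nat.cast_zero, zero_mul]
    refine Finset.sum_eq_zero fun α hα => ?_
    rw [Finset.Nat.mem_antidiagonalTuple] at hα
    have : ∃ i, α i < k i := by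
      by_contra hcon
      push_neg at hcon
      exact absurd (Finset.sum_le_sum fun i _ => hcon i) (by rw [hα]; exact Nat.not_le.2 hlt)
    obtain ⟨i, hi⟩ := this
    have : ((α i).descFactorial (k i) : ℝ) = 0 := by
      rw [Nat.descFactorial_eq_zero_iff_lt.2 hi, Nat.cast_zero]
    rw [Finset.prod_eq_zero (Finset.mem_univ i) this, zero_mul, zero_mul]

theorem stmt16 (n r : ℕ) (β : Fin n → ℕ) (x : Fin n → ℝ)
    (hx : x ∈ stdSimplex ℝ (Fin n)) :
    ∑ α ∈ Finset.Nat.antidiagonalTuple n r,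
      (∏ i, (α i : ℝ) ^ β i) * ((r.factorial : ℝ) / ∏ i, ((α i).factorial : ℝ)) *
        ∏ i, x i ^ α i
    = ∑ α ∈ Fintype.piFinset (fun i => Finset.range (β i + 1)),
        (r.descFactorial (∑ i, α i) : ℝ) * (∏ i, x i ^ α i) *
          ∏ i, (stirling (β i) (α i) : ℝ) := by
  have hx1 : ∑ i, x i = 1 := hx.2
  have step1 : ∀ α : Fin n → ℕ,
      (∏ i, (α i : ℝ) ^ β i) * ((r.factorial : ℝ) / ∏ i, ((α i).factorial : ℝ)) * ∏ i, x i ^ α i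
      = ∑ κ ∈ Fintype.piFinset (fun i => Finset.range (β i + 1)),
          (∏ i, (stirling (β i) (κ i) : ℝ)) *
          ((∏ i, ((α i).descFactorial (κ i) : ℝ)) *
            ((r.factorial : ℝ) / ∏ i, ((α i).factorial : ℝ)) * ∏ i, x i ^ α i) := by
    intro α
    have hps : (∏ i, (α i : ℝ) ^ β i)
        = ∑ κ ∈ Fintype.piFinset (fun i => Finset.range (β i + 1)),
            ∏ i, ((stirling (β i) (κ i) : ℝ) * ((α i).descFactorial (κ i) : ℝ)) := by
      rw [← Finset.prod_univ_sum (fun i => Finset.range (β i + 1))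
        (fun i c => (stirling (β i) c : ℝ) * ((α i).descFactorial c : ℝ))]
      refine Finset.prod_congr rfl fun i _ => ?_
      rw [← Nat.cast_pow, pow_eq_sum_stirling]
      push_cast
      rfl
    rw [hps, Finset.sum_mul, Finset.sum_mul]
    refine Finset.sum_congr rfl fun κ _ => ?_
    rw [Finset.prod_mul_distrib]
    ring
  rw [Finset.sum_congr rfl fun α _ => step1 α, Finset.sum_comm]
  refine Finset.sum_congr rfl fun κ _ => ?_
  rw [← Finset.mul_sum, factorial_moment n r x hx1 κ]
  ring
end

section
/- For any homogeneous polynomial f = Σ_{β∈I(n,d)} f_β x^β of degree d, integer r ≥ 1, and x ∈ Δ_n, one has B_r(f)(x) − f(x) ≤ (1 − r^{d̲}/r^d)·(max_{β∈I(n,d)} f_β·β!/d! − min_{β∈I(n,d)} f_β·β!/d!). -/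
private lemma adt_eq (n d : ℕ) :
    Finset.Nat.antidiagonalTuple n d = Finset.piAntidiag Finset.univ d := by
  ext β
  simp [Finset.Nat.mem_antidiagonalTuple]

private lemma multinomial_real {n : ℕ} (d : ℕ) (y : Fin n → ℝ) :
    (∑ i, y i) ^ d = ∑ β ∈ Finset.Nat.antidiagonalTuple n d,
      ((d.factorial : ℝ) / ∏ i, ((β i).factorial : ℝ)) * ∏ i, y i ^ β i := by
  rw [adt_eq, Finset.sum_pow_eq_sum_piAntidiag]
  refine Finset.sum_congr rfl fun β hβ => ?_
  rw [Finset.mem_piAntidiag] at hβ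
  congr 1
  have hs := Nat.multinomial_spec Finset.univ β
  have h1 : ∑ i, β i = d := hβ.1
  have h2 : (∏ i, ((β i).factorial : ℝ)) ≠ 0 := by positivity
  rw [h1] at hs
  rw [eq_div_iff h2, mul_comm]
  exact_mod_cast hs

private lemma moment {n : ℕ} (d r : ℕ) (x : Fin n → ℝ) (β : Fin n → ℕ)
    (hβ : ∑ i, β i = d) :
    ∑ α ∈ Finset.Nat.antidiagonalTuple n r,
      ((r.factorial : ℝ) / ∏ i, ((α i).factorial : ℝ)) * (∏ i, x i ^ α i) *
        ∏ i, ((α i).descFactorial (β i) : ℝ)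
    = (r.descFactorial d : ℝ) * (∏ i, x i ^ β i) * (∑ i, x i) ^ (r - d) := by
  by_cases hdr : d ≤ r
  · set T := Finset.Nat.antidiagonalTuple n r with hT
    set G := Finset.Nat.antidiagonalTuple n (r - d) with hG
    set F : (Fin n → ℕ) → ℝ := fun α =>
      ((r.factorial : ℝ) / ∏ i, ((α i).factorial : ℝ)) * (∏ i, x i ^ α i) *
        ∏ i, ((α i).descFactorial (β i) : ℝ) with hF
    have hsub : G.image (β + ·) ⊆ T := by
      intro α hα
      simp only [Finset.mem_image] at hα
      obtain ⟨γ, hγ, rfl⟩ := hα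
      rw [hG, Finset.Nat.mem_antidiagonalTuple] at hγ
      rw [hT, Finset.Nat.mem_antidiagonalTuple]
      simp only [Pi.add_apply, Finset.sum_add_distrib, hβ, hγ]
      omega
    have hzero : ∀ α ∈ T, α ∉ G.image (β + ·) → F α = 0 := by
      intro α hα hα'
      have hlt : ∃ i, α i < β i := by
        by_contra h
        push_neg at h
        exact hα' (Finset.mem_image.mpr ⟨α - β, by
          rw [hG, Finset.Nat.mem_antidiagonalTuple]
          rw [hT, Finset.Nat.mem_antidiagonalTuple] at hα
          have h2 : ∑ i, (α - β) i = (∑ i, α i) - ∑ i, β i := by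
            simp only [Pi.sub_apply]
            rw [Finset.sum_tsub_distrib]
            intro i _
            exact h i
          rw [h2, hα, hβ], by
          funext i
          have := h i
          simp only [Pi.add_apply, Pi.sub_apply]
          omega⟩)
      obtain ⟨i, hi⟩ := hlt
      have h0 : ((α i).descFactorial (β i) : ℝ) = 0 := by
        rw [Nat.descFactorial_eq_zero_iff_lt.mpr hi, Nat.cast_zero]
      rw [hF]
      simp only
      exact mul_eq_zero_of_right _ (Finset.prod_eq_zero (Finset.mem_univ i) h0)
    have hkey : ∀ γ ∈ G, F (β + γ) =
        (∏ i, x i ^ β i) * ((r.descFactorial d : ℝ) *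
          (((r - d).factorial : ℝ) / ∏ i, ((γ i).factorial : ℝ)) * ∏ i, x i ^ γ i) := by
      intro γ _
      have hfac : ∀ i, ((γ i).factorial : ℝ) * ((β i + γ i).descFactorial (β i) : ℝ)
          = ((β i + γ i).factorial : ℝ) := by
        intro i
        have := Nat.factorial_mul_descFactorial (Nat.le_add_right (β i) (γ i))
        rw [Nat.add_sub_cancel_left] at this
        exact_mod_cast this
      have hrfac : ((r - d).factorial : ℝ) * (r.descFactorial d : ℝ) = (r.factorial : ℝ) := by
        exact_mod_cast Nat.factorial_mul_descFactorial hdr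
      have hxpow : (∏ i, x i ^ (β i + γ i)) = (∏ i, x i ^ β i) * ∏ i, x i ^ γ i := by
        rw [← Finset.prod_mul_distrib]
        exact Finset.prod_congr rfl fun i _ => by simp [pow_add]
      have hprod : (∏ i, ((γ i).factorial : ℝ)) * ∏ i, ((β i + γ i).descFactorial (β i) : ℝ)
          = ∏ i, ((β i + γ i).factorial : ℝ) := by
        rw [← Finset.prod_mul_distrib]
        exact Finset.prod_congr rfl fun i _ => hfac i
      have hQ : (∏ i, ((γ i).factorial : ℝ)) ≠ 0 := by positivity
      have hD : (∏ i, ((β i + γ i).descFactorial (β i) : ℝ)) ≠ 0 := by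
        apply Finset.prod_ne_zero_iff.mpr
        intro i _
        have h1 : (β i + γ i).descFactorial (β i) ≠ 0 := by
          rw [Ne, Nat.descFactorial_eq_zero_iff_lt]; omega
        positivity
      rw [hF]
      simp only [Pi.add_apply]
      rw [hxpow, ← hprod, ← hrfac]
      field_simp
    calc ∑ α ∈ T, F α = ∑ α ∈ G.image (β + ·), F α := (Finset.sum_subset hsub hzero).symm
      _ = ∑ γ ∈ G, F (β + γ) := Finset.sum_image (fun a _ b _ h => by
            funext i; have := congrFun h i; simp only [Pi.add_apply] at this; omega)
      _ = ∑ γ ∈ G, (∏ i, x i ^ β i) * ((r.descFactorial d : ℝ) *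
            (((r - d).factorial : ℝ) / ∏ i, ((γ i).factorial : ℝ)) * ∏ i, x i ^ γ i) :=
            Finset.sum_congr rfl hkey
      _ = (r.descFactorial d : ℝ) * (∏ i, x i ^ β i) * (∑ i, x i) ^ (r - d) := by
            rw [multinomial_real (r - d) x, Finset.mul_sum]
            exact Finset.sum_congr rfl fun γ _ => by ring
  · push_neg at hdr
    rw [Nat.descFactorial_eq_zero_iff_lt.mpr hdr, Nat.cast_zero, zero_mul, zero_mul]
    apply Finset.sum_eq_zero
    intro α hα
    rw [Finset.Nat.mem_antidiagonalTuple] at hα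
    have hlt : ∃ i, α i < β i := by
      by_contra h
      push_neg at h
      have : d ≤ r := by
        calc d = ∑ i, β i := hβ.symm
          _ ≤ ∑ i, α i := Finset.sum_le_sum fun i _ => h i
          _ = r := hα
      omega
    obtain ⟨i, hi⟩ := hlt
    have h0 : ((α i).descFactorial (β i) : ℝ) = 0 := by
      rw [Nat.descFactorial_eq_zero_iff_lt.mpr hi, Nat.cast_zero]
    exact mul_eq_zero_of_right _ (Finset.prod_eq_zero (Finset.mem_univ i) h0)

private lemma main {n : ℕ} (d r : ℕ) (hr : 1 ≤ r) (c : (Fin n → ℕ) → ℝ) (x : Fin n → ℝ)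
    (hx0 : ∀ i, 0 ≤ x i) (hx1 : ∑ i, x i = 1) (m M : ℝ)
    (hm : ∀ β ∈ Finset.Nat.antidiagonalTuple n d,
      m ≤ c β * (∏ i, ((β i).factorial : ℝ)) / (d.factorial : ℝ))
    (hM : ∀ β ∈ Finset.Nat.antidiagonalTuple n d,
      c β * (∏ i, ((β i).factorial : ℝ)) / (d.factorial : ℝ) ≤ M) :
    bern r (fun y => ∑ β ∈ Finset.Nat.antidiagonalTuple n d, c β * ∏ i, y i ^ β i) x -
        (∑ β ∈ Finset.Nat.antidiagonalTuple n d, c β * ∏ i, x i ^ β i)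
      ≤ (1 - (r.descFactorial d : ℝ) / (r : ℝ) ^ d) * (M - m) := by
  classical
  set S := Finset.Nat.antidiagonalTuple n d with hS
  set T := Finset.Nat.antidiagonalTuple n r with hT
  have hr0 : (0:ℝ) < r := by exact_mod_cast hr
  have hRd : (0:ℝ) < (r:ℝ) ^ d := pow_pos hr0 d
  set W : (Fin n → ℕ) → ℝ := fun β => (d.factorial : ℝ) / ∏ i, ((β i).factorial : ℝ) with hW
  set L : (Fin n → ℕ) → ℝ :=
    fun β => c β * (∏ i, ((β i).factorial : ℝ)) / (d.factorial : ℝ) with hL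
  have hW0 : ∀ β, 0 ≤ W β := fun β => by rw [hW]; positivity
  have hcL : ∀ β, c β = L β * W β := by
    intro β
    simp only [hL, hW]
    have h1 : (∏ i, ((β i).factorial : ℝ)) ≠ 0 := by positivity
    have h2 : ((d.factorial : ℝ)) ≠ 0 := by positivity
    field_simp
  set P : (Fin n → ℕ) → ℝ := fun α => ∏ i, x i ^ α i with hP
  set K : (Fin n → ℕ) → ℝ := fun α => (r.factorial : ℝ) / ∏ i, ((α i).factorial : ℝ) with hK
  set A : (Fin n → ℕ) → (Fin n → ℕ) → ℝ := fun α β => ∏ i, ((α i : ℝ)) ^ β i with hA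
  set D : (Fin n → ℕ) → (Fin n → ℕ) → ℝ :=
    fun α β => ∏ i, ((α i).descFactorial (β i) : ℝ) with hD
  have hK0 : ∀ α, 0 ≤ K α := fun α => by rw [hK]; positivity
  have hP0 : ∀ α, 0 ≤ P α := fun α => by
    simp only [hP]
    exact Finset.prod_nonneg fun i _ => pow_nonneg (hx0 i) _
  have hDA : ∀ α β, D α β ≤ A α β := by
    intro α β
    simp only [hD, hA]
    apply Finset.prod_le_prod (fun i _ => by positivity)
    intro i _
    exact_mod_cast Nat.descFactorial_le_pow (α i) (β i)
  have hKP1 : ∑ α ∈ T, K α * P α = 1 := by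
    simp only [hT, hK, hP]
    have h := multinomial_real r x
    rw [hx1, one_pow] at h
    exact h.symm
  have hWxb : ∑ β ∈ S, W β * P β = 1 := by
    simp only [hS, hW, hP]
    have h := multinomial_real d x
    rw [hx1, one_pow] at h
    exact h.symm
  have hArow : ∀ α ∈ T, ∑ β ∈ S, W β * A α β = (r:ℝ) ^ d := by
    intro α hα
    rw [hT, Finset.Nat.mem_antidiagonalTuple] at hα
    have hs : (∑ i, (α i : ℝ)) = (r : ℝ) := by exact_mod_cast hα
    simp only [hS, hW, hA]
    have h := multinomial_real d (fun i => (α i : ℝ))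
    rw [hs] at h
    exact h.symm
  have hmom : ∀ β ∈ S, ∑ α ∈ T, K α * P α * D α β = (r.descFactorial d : ℝ) * P β := by
    intro β hβ
    rw [hS, Finset.Nat.mem_antidiagonalTuple] at hβ
    have h := moment d r x β hβ
    rw [hx1, one_pow, mul_one] at h
    simpa only [hT, hK, hP, hD] using h
  set E : (Fin n → ℕ) → ℝ := fun β => ∑ α ∈ T, K α * P α * (A α β - D α β) with hE
  have hE0 : ∀ β, 0 ≤ E β := by
    intro β
    rw [hE]
    exact Finset.sum_nonneg fun α _ =>
      mul_nonneg (mul_nonneg (hK0 α) (hP0 α)) (by linarith [hDA α β])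
  have hbern : bern r (fun y => ∑ β ∈ S, c β * ∏ i, y i ^ β i) x
      = ((r.descFactorial d : ℝ) / (r:ℝ)^d) * (∑ β ∈ S, c β * P β)
        + (1/(r:ℝ)^d) * ∑ β ∈ S, c β * E β := by
    have step1 : bern r (fun y => ∑ β ∈ S, c β * ∏ i, y i ^ β i) x
        = ∑ α ∈ T, (∑ β ∈ S, c β * (A α β / (r:ℝ)^d)) * (K α * P α) := by
      rw [bern]
      apply Finset.sum_congr hT.symm
      intro α hα
      have hmon : ∀ β ∈ S, (∏ i, ((α i : ℝ) / r) ^ β i) = A α β / (r:ℝ)^d := by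
        intro β hβ
        rw [hS, Finset.Nat.mem_antidiagonalTuple] at hβ
        simp only [hA]
        rw [← hβ]
        simp_rw [div_pow]
        rw [Finset.prod_div_distrib, Finset.prod_pow_eq_pow_sum]
      have hf : (∑ β ∈ S, c β * ∏ i, ((α i : ℝ) / r) ^ β i)
          = ∑ β ∈ S, c β * (A α β / (r:ℝ)^d) :=
        Finset.sum_congr rfl fun β hβ => by rw [hmon β hβ]
      simp only [hK, hP]
      rw [hf]
      ring
    have step2 : ∑ α ∈ T, (∑ β ∈ S, c β * (A α β / (r:ℝ)^d)) * (K α * P α)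
        = ∑ β ∈ S, (c β/(r:ℝ)^d) * (∑ α ∈ T, K α * P α * A α β) := by
      simp_rw [Finset.sum_mul]
      rw [Finset.sum_comm]
      apply Finset.sum_congr rfl
      intro β _
      rw [Finset.mul_sum]
      apply Finset.sum_congr rfl
      intro α _
      ring
    have step3 : ∀ β ∈ S, ∑ α ∈ T, K α * P α * A α β
        = (r.descFactorial d : ℝ) * P β + E β := by
      intro β hβ
      rw [hE, ← hmom β hβ, ← Finset.sum_add_distrib]
      apply Finset.sum_congr rfl
      intro α _
      ring
    have step4 : ∑ β ∈ S, c β / (r:ℝ)^d * ∑ α ∈ T, K α * P α * A α β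
        = ∑ β ∈ S, c β / (r:ℝ)^d * ((r.descFactorial d : ℝ) * P β + E β) :=
      Finset.sum_congr rfl fun β hβ => by rw [step3 β hβ]
    rw [step1, step2, step4, Finset.mul_sum, Finset.mul_sum, ← Finset.sum_add_distrib]
    apply Finset.sum_congr rfl
    intro β _
    ring
  have hfirst : ∑ β ∈ S, ∑ α ∈ T, W β * (K α * P α * A α β) = (r:ℝ)^d := by
    rw [Finset.sum_comm]
    have h1 : ∀ α ∈ T, ∑ β ∈ S, W β * (K α * P α * A α β) = K α * P α * ((r:ℝ)^d) := by
      intro α hα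
      rw [← hArow α hα, Finset.mul_sum]
      apply Finset.sum_congr rfl
      intro β _
      ring
    rw [Finset.sum_congr rfl h1, ← Finset.sum_mul, hKP1, one_mul]
  have hsecond : ∑ β ∈ S, ∑ α ∈ T, W β * (K α * P α * D α β) = (r.descFactorial d : ℝ) := by
    have h1 : ∀ β ∈ S, ∑ α ∈ T, W β * (K α * P α * D α β)
        = (r.descFactorial d : ℝ) * (W β * P β) := by
      intro β hβ
      rw [← Finset.mul_sum, hmom β hβ]
      ring
    rw [Finset.sum_congr rfl h1, ← Finset.mul_sum, hWxb, mul_one]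
  have hEsum : ∑ β ∈ S, W β * E β = (r:ℝ)^d - (r.descFactorial d : ℝ) := by
    have h1 : ∀ β ∈ S, W β * E β
        = (∑ α ∈ T, W β * (K α * P α * A α β)) - ∑ α ∈ T, W β * (K α * P α * D α β) := by
      intro β _
      rw [hE, Finset.mul_sum, ← Finset.sum_sub_distrib]
      apply Finset.sum_congr rfl
      intro α _
      ring
    rw [Finset.sum_congr rfl h1, Finset.sum_sub_distrib, hfirst, hsecond]
  have hFm : m ≤ ∑ β ∈ S, c β * P β := by
    have h1 : ∀ β ∈ S, m * (W β * P β) ≤ c β * P β := by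
      intro β hβ
      rw [hcL β]
      have h0 : 0 ≤ W β * P β := mul_nonneg (hW0 β) (hP0 β)
      calc m * (W β * P β) ≤ L β * (W β * P β) :=
            mul_le_mul_of_nonneg_right (hm β hβ) h0
        _ = L β * W β * P β := by ring
    calc m = m * ∑ β ∈ S, W β * P β := by rw [hWxb, mul_one]
      _ = ∑ β ∈ S, m * (W β * P β) := Finset.mul_sum _ _ _
      _ ≤ ∑ β ∈ S, c β * P β := Finset.sum_le_sum h1
  have hcE : ∑ β ∈ S, c β * E β ≤ M * ((r:ℝ)^d - (r.descFactorial d : ℝ)) := by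
    have h1 : ∀ β ∈ S, c β * E β ≤ M * (W β * E β) := by
      intro β hβ
      rw [hcL β]
      have h0 : 0 ≤ W β * E β := mul_nonneg (hW0 β) (hE0 β)
      calc L β * W β * E β = L β * (W β * E β) := by ring
        _ ≤ M * (W β * E β) := mul_le_mul_of_nonneg_right (hM β hβ) h0
    calc ∑ β ∈ S, c β * E β ≤ ∑ β ∈ S, M * (W β * E β) := Finset.sum_le_sum h1
      _ = M * ∑ β ∈ S, W β * E β := (Finset.mul_sum _ _ _).symm
      _ = M * ((r:ℝ)^d - (r.descFactorial d : ℝ)) := by rw [hEsum]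
  have hPP : (∑ β ∈ S, c β * ∏ i, x i ^ β i) = ∑ β ∈ S, c β * P β :=
    Finset.sum_congr rfl fun β _ => by rw [hP]
  rw [hbern, hPP]
  have hdle : (r.descFactorial d : ℝ) ≤ (r:ℝ)^d := by
    have := Nat.descFactorial_le_pow r d
    calc (r.descFactorial d : ℝ) ≤ ((r^d : ℕ) : ℝ) := by exact_mod_cast this
      _ = (r:ℝ)^d := by push_cast; ring
  have ht1 : (r.descFactorial d : ℝ)/(r:ℝ)^d ≤ 1 := (div_le_one hRd).mpr hdle
  have h1 : ((r.descFactorial d : ℝ)/(r:ℝ)^d - 1) * (∑ β ∈ S, c β * P β)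
      ≤ ((r.descFactorial d : ℝ)/(r:ℝ)^d - 1) * m :=
    mul_le_mul_of_nonpos_left hFm (by linarith)
  have h2 : (1/(r:ℝ)^d) * (∑ β ∈ S, c β * E β)
      ≤ (1/(r:ℝ)^d) * (M * ((r:ℝ)^d - (r.descFactorial d : ℝ))) :=
    mul_le_mul_of_nonneg_left hcE (by positivity)
  calc ((r.descFactorial d : ℝ) / (r:ℝ)^d) * (∑ β ∈ S, c β * P β)
        + (1/(r:ℝ)^d) * (∑ β ∈ S, c β * E β) - (∑ β ∈ S, c β * P β)
      = ((r.descFactorial d : ℝ)/(r:ℝ)^d - 1) * (∑ β ∈ S, c β * P β)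
        + (1/(r:ℝ)^d) * (∑ β ∈ S, c β * E β) := by ring
    _ ≤ ((r.descFactorial d : ℝ)/(r:ℝ)^d - 1) * m
        + (1/(r:ℝ)^d) * (M * ((r:ℝ)^d - (r.descFactorial d : ℝ))) := add_le_add h1 h2
    _ = (1 - (r.descFactorial d : ℝ) / (r : ℝ) ^ d) * (M - m) := by
        field_simp
        ring

theorem stmt18 (n d r : ℕ) (hr : 1 ≤ r) (c : (Fin n → ℕ) → ℝ) (x : Fin n → ℝ)
    (hx : x ∈ stdSimplex ℝ (Fin n)) :
    bern r (fun y => ∑ β ∈ Finset.Nat.antidiagonalTuple n d, c β * ∏ i, y i ^ β i) x -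
        (∑ β ∈ Finset.Nat.antidiagonalTuple n d, c β * ∏ i, x i ^ β i)
      ≤ (1 - (r.descFactorial d : ℝ) / (r : ℝ) ^ d) *
        (sSup ((fun β => c β * (∏ i, ((β i).factorial : ℝ)) / (d.factorial : ℝ)) ''
            (Finset.Nat.antidiagonalTuple n d : Set (Fin n → ℕ))) -
         sInf ((fun β => c β * (∏ i, ((β i).factorial : ℝ)) / (d.factorial : ℝ)) ''
            (Finset.Nat.antidiagonalTuple n d : Set (Fin n → ℕ)))) := by
  obtain ⟨hx0, hx1⟩ := hx
  refine main d r hr c x hx0 hx1 _ _ ?_ ?_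
  · intro β hβ
    exact csInf_le ((Set.Finite.image _ (Finset.finite_toSet _)).bddBelow)
      ⟨β, Finset.mem_coe.mpr hβ, rfl⟩
  · intro β hβ
    exact le_csSup ((Set.Finite.image _ (Finset.finite_toSet _)).bddAbove)
      ⟨β, Finset.mem_coe.mpr hβ, rfl⟩
end
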